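/- arXiv:2010.08828 — 4 statements merged into one kernel-verified Lean document; each statement's English description precedes it below -/
import Mathlib

section
/- Let G be a finite connected simple graph on n vertices with m edges and matching number μ(G). Then for any magnetic potential α on G, λ_{μ(G)+n-m}(Δ_α^G) ≤ 2 ≤ λ_{n-μ(G)+1}(Δ_α^G). -/
open Classical in
/-- The discrete magnetic Laplacian of a simple graph `G` on `Fin n` with magnetic
potential `α`. -/
noncomputable def magLap {n : ℕ} (G : SimpleGraph (Fin n)) (α : Fin n → Fin n → ℝ) :
    Matrix (Fin n) (Fin n) ℂ :=
  Matrix.of fun u v =>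
    if u = v then ((G.neighborSet u).ncard : ℂ)
    else if G.Adj u v then -Complex.exp (α u v * Complex.I) else 0

lemma magLap_isHermitian {n : ℕ} (G : SimpleGraph (Fin n)) (α : Fin n → Fin n → ℝ)
    (hα : ∀ u v, α v u = -α u v) : (magLap G α).IsHermitian := by
  rw [Matrix.IsHermitian]
  ext u v
  simp only [Matrix.conjTranspose_apply, magLap, Matrix.of_apply]
  by_cases huv : u = v
  · subst huv; simp
  · have hvu : ¬ v = u := fun h => huv h.symm
    rw [if_neg hvu, if_neg huv]
    by_cases hadj : G.Adj u v
    · rw [if_pos hadj.symm, if_pos hadj, star_neg]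
      have h1 : star (Complex.exp ((α v u : ℂ) * Complex.I)) =
          Complex.exp ((starRingEnd ℂ) ((α v u : ℂ) * Complex.I)) :=
        (Complex.exp_conj _).symm
      rw [h1]
      congr 1
      rw [hα u v]
      simp [map_mul, Complex.conj_ofReal, Complex.conj_I]
    · rw [if_neg (fun h => hadj h.symm), if_neg hadj, star_zero]

/-- The `k`-th smallest eigenvalue (1-indexed, with multiplicity) of a Hermitian
matrix, as an extended real number; `⊥` for `k = 0` and `⊤` for `k > n`. -/
noncomputable def lamb {n : ℕ} {A : Matrix (Fin n) (Fin n) ℂ} (hA : A.IsHermitian) (k : ℕ) :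
    EReal :=
  if h : 1 ≤ k ∧ k ≤ n then
    (((hA.eigenvalues ∘ Tuple.sort hA.eigenvalues) ⟨k - 1, by omega⟩ : ℝ) : EReal)
  else if k = 0 then ⊥ else ⊤

/-- The matching number of a graph: the maximal number of pairwise independent edges. -/
noncomputable def matchingNumber {n : ℕ} (G : SimpleGraph (Fin n)) : ℕ :=
  sSup {k : ℕ | ∃ M : G.Subgraph, M.IsMatching ∧ M.edgeSet.ncard = k}


open Matrix Complex

namespace CMBAux

variable {ι : Type*} [Fintype ι]

lemma dotTrans {κ₁ κ₂ : Type*} [Fintype κ₁] [Fintype κ₂]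
    (P : Matrix ι κ₁ ℂ) (Q : Matrix ι κ₂ ℂ) (a : κ₁ → ℂ) (b : κ₂ → ℂ) :
    star (P *ᵥ a) ⬝ᵥ (Q *ᵥ b) = star a ⬝ᵥ ((Pᴴ * Q) *ᵥ b) := by
  rw [star_mulVec, ← Matrix.mulVec_mulVec, Matrix.dotProduct_mulVec,
    Matrix.vecMul_vecMul, ← Matrix.dotProduct_mulVec, ← Matrix.mulVec_mulVec]

lemma diagForm [DecidableEq ι] (f : ι → ℝ) (y : ι → ℂ) :
    (star y ⬝ᵥ (Matrix.diagonal (fun i => (f i : ℂ)) *ᵥ y)).re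
      = ∑ i, f i * Complex.normSq (y i) := by
  rw [dotProduct, Complex.re_sum]
  refine Finset.sum_congr rfl fun i _ => ?_
  have : star y i * ((f i : ℂ) * y i) = ((f i * Complex.normSq (y i) : ℝ) : ℂ) := by
    rw [Pi.star_apply]
    have : star (y i) * ((f i : ℂ) * y i) = (f i : ℂ) * (star (y i) * y i) := by ring
    rw [this, Complex.star_def, ← Complex.normSq_eq_conj_mul_self]
    push_cast
    ring
  rw [Matrix.mulVec_diagonal, this]
  exact Complex.ofReal_re _

lemma nsqForm (y : ι → ℂ) : (star y ⬝ᵥ y).re = ∑ i, Complex.normSq (y i) := by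
  rw [dotProduct, Complex.re_sum]
  refine Finset.sum_congr rfl fun i _ => ?_
  rw [Pi.star_apply, Complex.star_def, ← Complex.normSq_eq_conj_mul_self]
  exact Complex.ofReal_re _

end CMBAux

namespace CMBAux

open Matrix Complex

variable {ι : Type*} [Fintype ι] [DecidableEq ι] {A : Matrix ι ι ℂ}

/-- quadratic form coordinates via the eigenvector unitary -/
lemma qform_eq (hA : A.IsHermitian) (x : ι → ℂ) :
    (star x ⬝ᵥ (A *ᵥ x)).re
      = ∑ i, hA.eigenvalues i * Complex.normSq (((hA.eigenvectorUnitary : Matrix ι ι ℂ)ᴴ *ᵥ x) i) := by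
  have h : star x ⬝ᵥ (A *ᵥ x)
      = star ((hA.eigenvectorUnitary : Matrix ι ι ℂ)ᴴ *ᵥ x) ⬝ᵥ
        (Matrix.diagonal (fun i => (hA.eigenvalues i : ℂ)) *ᵥ
          ((hA.eigenvectorUnitary : Matrix ι ι ℂ)ᴴ *ᵥ x)) := by
    rw [Matrix.mulVec_mulVec, dotTrans, Matrix.conjTranspose_conjTranspose,
      ← Matrix.mul_assoc]
    congr 1
    conv_lhs => rw [hA.spectral_theorem]
    rw [Unitary.conjStarAlgAut_apply, Matrix.star_eq_conjTranspose]
    rfl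
  rw [h, diagForm]

lemma nsq_eq (hA : A.IsHermitian) (x : ι → ℂ) :
    (star x ⬝ᵥ x).re
      = ∑ i, Complex.normSq (((hA.eigenvectorUnitary : Matrix ι ι ℂ)ᴴ *ᵥ x) i) := by
  have h : star x ⬝ᵥ x
      = star ((hA.eigenvectorUnitary : Matrix ι ι ℂ)ᴴ *ᵥ x) ⬝ᵥ
        ((hA.eigenvectorUnitary : Matrix ι ι ℂ)ᴴ *ᵥ x) := by
    rw [dotTrans, Matrix.conjTranspose_conjTranspose]
    have h1 : (hA.eigenvectorUnitary : Matrix ι ι ℂ) * (hA.eigenvectorUnitary : Matrix ι ι ℂ)ᴴ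
        = 1 := by
      rw [← Matrix.star_eq_conjTranspose]
      exact Matrix.mem_unitaryGroup_iff.mp hA.eigenvectorUnitary.2
    rw [h1, Matrix.one_mulVec]
  rw [h, nsqForm]

lemma recover_x (hA : A.IsHermitian) (x : ι → ℂ) :
    (hA.eigenvectorUnitary : Matrix ι ι ℂ) *ᵥ
      ((hA.eigenvectorUnitary : Matrix ι ι ℂ)ᴴ *ᵥ x) = x := by
  rw [Matrix.mulVec_mulVec]
  have h1 : (hA.eigenvectorUnitary : Matrix ι ι ℂ) * (hA.eigenvectorUnitary : Matrix ι ι ℂ)ᴴ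
      = 1 := by
    rw [← Matrix.star_eq_conjTranspose]
    exact Matrix.mem_unitaryGroup_iff.mp hA.eigenvectorUnitary.2
  rw [h1, Matrix.one_mulVec]

/-- Core: a nonzero kernel element supported away from `P`-coordinates. -/
lemma cf_core (hA : A.IsHermitian) (P : ι → Prop) (S : Submodule ℂ (ι → ℂ))
    (h : ∀ x : ι → ℂ, x ∈ S → x ≠ 0 →
      (∀ i, P i → ((hA.eigenvectorUnitary : Matrix ι ι ℂ)ᴴ *ᵥ x) i = 0) → False) :
    Module.finrank ℂ S ≤ Nat.card {i // P i} := by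
  classical
  rw [Nat.card_eq_fintype_card]
  by_contra hlt
  push_neg at hlt
  set φ : S →ₗ[ℂ] ({i // P i} → ℂ) :=
    (LinearMap.funLeft ℂ ℂ (Subtype.val)).comp
      (((hA.eigenvectorUnitary : Matrix ι ι ℂ)ᴴ).mulVecLin.comp S.subtype) with hφ
  have hninj : ¬ Function.Injective φ := by
    intro hinj
    have := LinearMap.finrank_le_finrank_of_injective hinj
    rw [Module.finrank_fintype_fun_eq_card] at this
    omega
  rw [← LinearMap.ker_eq_bot] at hninj
  obtain ⟨x, hxk, hx0⟩ := Submodule.ne_bot_iff _ |>.mp hninj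
  rw [LinearMap.mem_ker] at hxk
  refine h x.val x.2 (fun hc => hx0 (Subtype.ext hc)) (fun i hi => ?_)
  have := congrFun hxk ⟨i, hi⟩
  simpa [hφ] using this

end CMBAux

namespace CMBAux

open Matrix Complex

variable {ι : Type*} [Fintype ι] [DecidableEq ι] {A : Matrix ι ι ℂ}

private lemma exists_coord (hA : A.IsHermitian) {x : ι → ℂ} (hx0 : x ≠ 0) :
    ∃ i, ((hA.eigenvectorUnitary : Matrix ι ι ℂ)ᴴ *ᵥ x) i ≠ 0 := by
  by_contra hc
  push_neg at hc
  apply hx0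
  have hy : (hA.eigenvectorUnitary : Matrix ι ι ℂ)ᴴ *ᵥ x = 0 := funext hc
  have := recover_x hA x
  rw [hy, Matrix.mulVec_zero] at this
  exact this.symm

private lemma sum_split (c : ℝ) (f g : ι → ℝ) :
    ∑ i, (c - f i) * g i = c * (∑ i, g i) - ∑ i, f i * g i := by
  rw [Finset.mul_sum, ← Finset.sum_sub_distrib]
  exact Finset.sum_congr rfl fun i _ => by ring

lemma cf_le (hA : A.IsHermitian) (c : ℝ) (S : Submodule ℂ (ι → ℂ))
    (hS : ∀ x ∈ S, (star x ⬝ᵥ (A *ᵥ x)).re ≤ c * (star x ⬝ᵥ x).re) :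
    Module.finrank ℂ S ≤ Nat.card {i // hA.eigenvalues i ≤ c} := by
  refine cf_core hA _ S (fun x hx hx0 h0 => ?_)
  set y := (hA.eigenvectorUnitary : Matrix ι ι ℂ)ᴴ *ᵥ x with hy
  obtain ⟨i₀, hi₀⟩ := exists_coord hA hx0
  have hSx := hS x hx
  rw [qform_eq hA x, nsq_eq hA x] at hSx
  have hterm : ∀ i, (c - hA.eigenvalues i) * Complex.normSq (y i) ≤ 0 := by
    intro i
    by_cases hP : hA.eigenvalues i ≤ c
    · rw [h0 i hP]; simp
    · push_neg at hP
      nlinarith [Complex.normSq_nonneg (y i)]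
  have hstrict : (c - hA.eigenvalues i₀) * Complex.normSq (y i₀) < 0 := by
    have hP : ¬ hA.eigenvalues i₀ ≤ c := fun h => hi₀ (h0 i₀ h)
    push_neg at hP
    exact mul_neg_of_neg_of_pos (by linarith) (Complex.normSq_pos.mpr hi₀)
  have hsum : ∑ i, (c - hA.eigenvalues i) * Complex.normSq (y i) < 0 := by
    have h1 : ∑ i, (c - hA.eigenvalues i) * Complex.normSq (y i) <
        ∑ _i : ι, (0 : ℝ) :=
      Finset.sum_lt_sum (fun i _ => hterm i) ⟨i₀, Finset.mem_univ _, hstrict⟩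
    simpa using h1
  rw [sum_split] at hsum
  linarith

lemma cf_ge (hA : A.IsHermitian) (c : ℝ) (S : Submodule ℂ (ι → ℂ))
    (hS : ∀ x ∈ S, c * (star x ⬝ᵥ x).re ≤ (star x ⬝ᵥ (A *ᵥ x)).re) :
    Module.finrank ℂ S ≤ Nat.card {i // c ≤ hA.eigenvalues i} := by
  refine cf_core hA _ S (fun x hx hx0 h0 => ?_)
  set y := (hA.eigenvectorUnitary : Matrix ι ι ℂ)ᴴ *ᵥ x with hy
  obtain ⟨i₀, hi₀⟩ := exists_coord hA hx0
  have hSx := hS x hx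
  rw [qform_eq hA x, nsq_eq hA x] at hSx
  have hterm : ∀ i, (hA.eigenvalues i - c) * Complex.normSq (y i) ≤ 0 := by
    intro i
    by_cases hP : c ≤ hA.eigenvalues i
    · rw [h0 i hP]; simp
    · push_neg at hP
      nlinarith [Complex.normSq_nonneg (y i)]
  have hstrict : (hA.eigenvalues i₀ - c) * Complex.normSq (y i₀) < 0 := by
    have hP : ¬ c ≤ hA.eigenvalues i₀ := fun h => hi₀ (h0 i₀ h)
    push_neg at hP
    exact mul_neg_of_neg_of_pos (by linarith) (Complex.normSq_pos.mpr hi₀)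
  have hsum : ∑ i, (hA.eigenvalues i - c) * Complex.normSq (y i) < 0 := by
    have h1 : ∑ i, (hA.eigenvalues i - c) * Complex.normSq (y i) <
        ∑ _i : ι, (0 : ℝ) :=
      Finset.sum_lt_sum (fun i _ => hterm i) ⟨i₀, Finset.mem_univ _, hstrict⟩
    simpa using h1
  have hsplit : ∑ i, (hA.eigenvalues i - c) * Complex.normSq (y i)
      = ∑ i, hA.eigenvalues i * Complex.normSq (y i)
        - c * ∑ i, Complex.normSq (y i) := by
    rw [Finset.mul_sum, ← Finset.sum_sub_distrib]
    exact Finset.sum_congr rfl fun i _ => by ring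
  rw [hsplit] at hsum
  linarith

lemma cf_gt (hA : A.IsHermitian) (c : ℝ) (S : Submodule ℂ (ι → ℂ))
    (hS : ∀ x ∈ S, x ≠ 0 → c * (star x ⬝ᵥ x).re < (star x ⬝ᵥ (A *ᵥ x)).re) :
    Module.finrank ℂ S ≤ Nat.card {i // c < hA.eigenvalues i} := by
  refine cf_core hA _ S (fun x hx hx0 h0 => ?_)
  set y := (hA.eigenvectorUnitary : Matrix ι ι ℂ)ᴴ *ᵥ x with hy
  have hSx := hS x hx hx0
  rw [qform_eq hA x, nsq_eq hA x] at hSx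
  have hterm : ∀ i, (hA.eigenvalues i - c) * Complex.normSq (y i) ≤ 0 := by
    intro i
    by_cases hP : c < hA.eigenvalues i
    · rw [h0 i hP]; simp
    · push_neg at hP
      nlinarith [Complex.normSq_nonneg (y i)]
  have hsum : ∑ i, (hA.eigenvalues i - c) * Complex.normSq (y i) ≤ 0 :=
    Finset.sum_nonpos (fun i _ => hterm i)
  have hsplit : ∑ i, (hA.eigenvalues i - c) * Complex.normSq (y i)
      = ∑ i, hA.eigenvalues i * Complex.normSq (y i)
        - c * ∑ i, Complex.normSq (y i) := by
    rw [Finset.mul_sum, ← Finset.sum_sub_distrib]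
    exact Finset.sum_congr rfl fun i _ => by ring
  rw [hsplit] at hsum
  linarith

end CMBAux

namespace CMBAux

open Matrix Complex

variable {ι : Type*} [Fintype ι] [DecidableEq ι] {A : Matrix ι ι ℂ}

/-- extension by zero, as a function -/
def ext0 (P : ι → Prop) [DecidablePred P] (a : {i // P i} → ℂ) : ι → ℂ :=
  fun i => if h : P i then a ⟨i, h⟩ else 0

/-- extension by zero as a linear map -/
def ext0L (P : ι → Prop) [DecidablePred P] : ({i // P i} → ℂ) →ₗ[ℂ] (ι → ℂ) where
  toFun := ext0 P
  map_add' := fun a b => by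
    funext i
    by_cases h : P i <;> simp [ext0, h]
  map_smul' := fun r a => by
    funext i
    by_cases h : P i <;> simp [ext0, h]

lemma sum_ext0 (P : ι → Prop) [DecidablePred P] (a : {i // P i} → ℂ)
    (F : ι → ℂ → ℝ) (hF : ∀ i, F i 0 = 0) :
    ∑ i, F i (ext0 P a i) = ∑ t : {i // P i}, F t.val (a t) := by
  calc ∑ i, F i (ext0 P a i)
      = ∑ i ∈ Finset.univ.filter P, F i (ext0 P a i) := by
        refine (Finset.sum_subset (Finset.filter_subset P Finset.univ) ?_).symm
        intro i _ hi
        rw [Finset.mem_filter] at hi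
        push_neg at hi
        have hni : ¬ P i := fun h => hi (Finset.mem_univ i) h
        rw [ext0, dif_neg hni, hF]
    _ = ∑ t : {i // P i}, F t.val (ext0 P a t.val) :=
        Finset.sum_subtype _ (fun i => by simp) _
    _ = ∑ t : {i // P i}, F t.val (a t) := by
        refine Finset.sum_congr rfl fun t _ => ?_
        rw [ext0, dif_pos t.prop]

end CMBAux

namespace CMBAux

open Matrix Complex

variable {ι : Type*} [Fintype ι] [DecidableEq ι] {A : Matrix ι ι ℂ}

lemma factor_q {κ : Type*} [Fintype κ] (d : Matrix κ ι ℂ) (x : ι → ℂ) :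
    star x ⬝ᵥ ((dᴴ * d) *ᵥ x) = star (d *ᵥ x) ⬝ᵥ (d *ᵥ x) :=
  (dotTrans d d x x).symm

lemma cf_transfer {κ : Type*} [Fintype κ] [DecidableEq κ] (hA : A.IsHermitian)
    (d : Matrix κ ι ℂ) (hAd : A = dᴴ * d) (c : ℝ) (hc : 0 ≤ c) :
    Nat.card {i // c < hA.eigenvalues i} ≤
      Nat.card {j // c < (Matrix.isHermitian_mul_conjTranspose_self d).eigenvalues j} := by
  classical
  have hU2 : (hA.eigenvectorUnitary : Matrix ι ι ℂ)ᴴ *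
      (hA.eigenvectorUnitary : Matrix ι ι ℂ) = 1 := by
    rw [← Matrix.star_eq_conjTranspose]
    exact Matrix.mem_unitaryGroup_iff'.mp hA.eigenvectorUnitary.2
  have hAU : ∀ v : ι → ℂ, A *ᵥ v = (hA.eigenvectorUnitary : Matrix ι ι ℂ) *ᵥ
      (Matrix.diagonal (fun i => (hA.eigenvalues i : ℂ)) *ᵥ
        ((hA.eigenvectorUnitary : Matrix ι ι ℂ)ᴴ *ᵥ v)) := by
    intro v
    conv_lhs => rw [hA.spectral_theorem]
    rw [Unitary.conjStarAlgAut_apply, Matrix.star_eq_conjTranspose]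
    simp only [Matrix.mulVec_mulVec, Matrix.mul_assoc]
    rfl
  set P : ι → Prop := fun i => c < hA.eigenvalues i with hP
  set ψ : ({i // P i} → ℂ) →ₗ[ℂ] (κ → ℂ) :=
    (d.mulVecLin).comp (((hA.eigenvectorUnitary : Matrix ι ι ℂ).mulVecLin).comp
      (ext0L P)) with hψ
  have hψ_apply : ∀ a, ψ a
      = d *ᵥ ((hA.eigenvectorUnitary : Matrix ι ι ℂ) *ᵥ ext0 P a) := fun a => rfl
  have f1 : ∀ a : {i // P i} → ℂ, (hA.eigenvectorUnitary : Matrix ι ι ℂ)ᴴ *ᵥ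
      ((hA.eigenvectorUnitary : Matrix ι ι ℂ) *ᵥ ext0 P a) = ext0 P a := by
    intro a
    rw [Matrix.mulVec_mulVec, hU2, Matrix.one_mulVec]
  have f2 : ∀ a : {i // P i} → ℂ,
      (star ((hA.eigenvectorUnitary : Matrix ι ι ℂ) *ᵥ ext0 P a) ⬝ᵥ
        (A *ᵥ ((hA.eigenvectorUnitary : Matrix ι ι ℂ) *ᵥ ext0 P a))).re
        = ∑ t : {i // P i}, hA.eigenvalues t.val * Complex.normSq (a t) := by
    intro a
    rw [qform_eq hA, f1 a, sum_ext0 P a (fun i z => hA.eigenvalues i * Complex.normSq z)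
      (fun i => by simp)]
  have f4 : ∀ a : {i // P i} → ℂ,
      A *ᵥ ((hA.eigenvectorUnitary : Matrix ι ι ℂ) *ᵥ ext0 P a)
        = (hA.eigenvectorUnitary : Matrix ι ι ℂ) *ᵥ
            (Matrix.diagonal (fun i => (hA.eigenvalues i : ℂ)) *ᵥ ext0 P a) := by
    intro a
    rw [hAU, f1 a]
  have f5 : ∀ a : {i // P i} → ℂ,
      (star (A *ᵥ ((hA.eigenvectorUnitary : Matrix ι ι ℂ) *ᵥ ext0 P a)) ⬝ᵥ
        (A *ᵥ ((hA.eigenvectorUnitary : Matrix ι ι ℂ) *ᵥ ext0 P a))).re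
        = ∑ t : {i // P i},
            hA.eigenvalues t.val * hA.eigenvalues t.val * Complex.normSq (a t) := by
    intro a
    rw [f4, dotTrans, hU2, Matrix.one_mulVec, nsqForm]
    have hcong : ∀ i, Complex.normSq ((Matrix.diagonal (fun i => (hA.eigenvalues i : ℂ)) *ᵥ
        ext0 P a) i) = hA.eigenvalues i * hA.eigenvalues i * Complex.normSq (ext0 P a i) := by
      intro i
      rw [Matrix.mulVec_diagonal, Complex.normSq_mul, Complex.normSq_ofReal]
    rw [Finset.sum_congr rfl (fun i _ => hcong i),
      sum_ext0 P a (fun i z => hA.eigenvalues i * hA.eigenvalues i * Complex.normSq z)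
        (fun i => by simp)]
  -- injectivity of ψ
  have hinj : Function.Injective ψ := by
    rw [← LinearMap.ker_eq_bot, LinearMap.ker_eq_bot']
    intro a ha
    rw [hψ_apply] at ha
    obtain ⟨x, hx⟩ : ∃ x, x = (hA.eigenvectorUnitary : Matrix ι ι ℂ) *ᵥ ext0 P a :=
      ⟨_, rfl⟩
    rw [← hx] at ha
    have hq0 : (star x ⬝ᵥ (A *ᵥ x)).re = 0 := by
      rw [hAd, ← Matrix.mulVec_mulVec, ha, Matrix.mulVec_zero, dotProduct_zero]
      simp
    rw [hx, f2] at hq0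
    have hzero : ∀ t ∈ (Finset.univ : Finset {i // P i}),
        hA.eigenvalues t.val * Complex.normSq (a t) = 0 := by
      rw [← Finset.sum_eq_zero_iff_of_nonneg]
      · exact hq0
      · intro t _
        have htP : c < hA.eigenvalues t.val := t.prop
        exact mul_nonneg (le_of_lt (lt_of_le_of_lt hc htP)) (Complex.normSq_nonneg _)
    funext t
    have h1 := hzero t (Finset.mem_univ t)
    have htP : c < hA.eigenvalues t.val := t.prop
    have hne : hA.eigenvalues t.val ≠ 0 := by intro h; rw [h] at htP; linarith
    exact Complex.normSq_eq_zero.mp ((mul_eq_zero.mp h1).resolve_left hne)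
  have hrank : Module.finrank ℂ (LinearMap.range ψ) = Nat.card {i // P i} := by
    rw [LinearMap.finrank_range_of_inj hinj, Module.finrank_fintype_fun_eq_card,
      Nat.card_eq_fintype_card]
  have happ := cf_gt (Matrix.isHermitian_mul_conjTranspose_self d) c (LinearMap.range ψ) ?_
  · rw [hrank] at happ
    exact happ
  · rintro w ⟨a, rfl⟩ hw0
    have ha0 : a ≠ 0 := by
      intro h
      rw [h, map_zero] at hw0
      exact hw0 rfl
    obtain ⟨x, hx⟩ : ∃ x, x = (hA.eigenvectorUnitary : Matrix ι ι ℂ) *ᵥ ext0 P a :=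
      ⟨_, rfl⟩
    rw [hψ_apply, ← hx]
    have hnsq : (star (d *ᵥ x) ⬝ᵥ (d *ᵥ x)).re
        = ∑ t : {i // P i}, hA.eigenvalues t.val * Complex.normSq (a t) := by
      rw [← factor_q, ← hAd, hx, f2]
    have hq : (star (d *ᵥ x) ⬝ᵥ ((d * dᴴ) *ᵥ (d *ᵥ x))).re
        = ∑ t : {i // P i},
            hA.eigenvalues t.val * hA.eigenvalues t.val * Complex.normSq (a t) := by
      have hstep : (d * dᴴ) *ᵥ (d *ᵥ x) = d *ᵥ (A *ᵥ x) := by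
        rw [hAd]
        simp only [Matrix.mulVec_mulVec, Matrix.mul_assoc]
      rw [hstep, dotTrans, ← hAd]
      have hAA : A *ᵥ (A *ᵥ x) = (Aᴴ * A) *ᵥ x := by
        rw [hA.eq, Matrix.mulVec_mulVec]
      rw [hAA, ← dotTrans, hx, f5]
    rw [hnsq, hq]
    obtain ⟨t₀, ht₀'⟩ := Function.ne_iff.mp ha0
    have ht₀ : a t₀ ≠ 0 := by simpa using ht₀'
    have hterm : ∀ t : {i // P i},
        c * (hA.eigenvalues t.val * Complex.normSq (a t)) ≤
          hA.eigenvalues t.val * hA.eigenvalues t.val * Complex.normSq (a t) := by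
      intro t
      have htP : c < hA.eigenvalues t.val := t.prop
      nlinarith [mul_nonneg (mul_nonneg (sub_nonneg.mpr (le_of_lt htP))
        (le_of_lt (lt_of_le_of_lt hc htP))) (Complex.normSq_nonneg (a t))]
    have hstrict : c * (hA.eigenvalues t₀.val * Complex.normSq (a t₀)) <
        hA.eigenvalues t₀.val * hA.eigenvalues t₀.val * Complex.normSq (a t₀) := by
      have htP : c < hA.eigenvalues t₀.val := t₀.prop
      have hns : 0 < Complex.normSq (a t₀) := Complex.normSq_pos.mpr ht₀
      nlinarith [mul_pos (mul_pos (sub_pos.mpr htP) (lt_of_le_of_lt hc htP)) hns]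
    calc c * ∑ t : {i // P i}, hA.eigenvalues t.val * Complex.normSq (a t)
        = ∑ t : {i // P i}, c * (hA.eigenvalues t.val * Complex.normSq (a t)) := by
          rw [Finset.mul_sum]
      _ < ∑ t : {i // P i},
            hA.eigenvalues t.val * hA.eigenvalues t.val * Complex.normSq (a t) :=
          Finset.sum_lt_sum (fun t _ => hterm t) ⟨t₀, Finset.mem_univ _, hstrict⟩

end CMBAux

namespace CMBAux

lemma sorted_le {n : ℕ} (f : Fin n → ℝ) (c : ℝ) (k : ℕ) (hk1 : 1 ≤ k) (hkn : k ≤ n)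
    (hcount : k ≤ Nat.card {i // f i ≤ c}) :
    (f ∘ Tuple.sort f) ⟨k - 1, by omega⟩ ≤ c := by
  by_contra h
  push_neg at h
  have hperm : Nat.card {i // f (Tuple.sort f i) ≤ c} = Nat.card {i // f i ≤ c} :=
    Nat.card_congr (Equiv.subtypeEquiv (Tuple.sort f) (fun i => Iff.rfl))
  have mono := Tuple.monotone_sort f
  have hsub : ∀ i : Fin n, f (Tuple.sort f i) ≤ c → (i : ℕ) < k - 1 := by
    intro i hi
    by_contra hge
    push_neg at hge
    have hle : (⟨k - 1, by omega⟩ : Fin n) ≤ i := hge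
    have := mono hle
    simp only [Function.comp_apply] at this
    exact absurd (le_trans this hi) (not_le.mpr h)
  have hinj : Function.Injective
      (fun t : {i : Fin n // f (Tuple.sort f i) ≤ c} =>
        (⟨t.val.val, hsub t.val t.prop⟩ : Fin (k - 1))) := by
    intro a b hab
    have h2 := congrArg Fin.val hab
    exact Subtype.ext (Fin.ext h2)
  have hcard := Nat.card_le_card_of_injective _ hinj
  rw [Nat.card_eq_fintype_card (α := Fin (k-1)), Fintype.card_fin, hperm] at hcard
  omega

lemma sorted_ge {n : ℕ} (f : Fin n → ℝ) (c : ℝ) (p : ℕ) (hp : p < n)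
    (hcount : Nat.card {i // f i < c} ≤ p) :
    c ≤ (f ∘ Tuple.sort f) ⟨p, hp⟩ := by
  by_contra h
  push_neg at h
  have hperm : Nat.card {i // f (Tuple.sort f i) < c} = Nat.card {i // f i < c} :=
    Nat.card_congr (Equiv.subtypeEquiv (Tuple.sort f) (fun i => Iff.rfl))
  have mono := Tuple.monotone_sort f
  have hmap : ∀ j : Fin (p + 1), f (Tuple.sort f ⟨j.val, by omega⟩) < c := by
    intro j
    have hle : (⟨j.val, by omega⟩ : Fin n) ≤ ⟨p, hp⟩ := by
      simp only [Fin.mk_le_mk]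
      omega
    have := mono hle
    simp only [Function.comp_apply] at this
    exact lt_of_le_of_lt this h
  have hinj : Function.Injective
      (fun j : Fin (p + 1) =>
        (⟨⟨j.val, by omega⟩, hmap j⟩ : {i : Fin n // f (Tuple.sort f i) < c})) := by
    intro a b hab
    have := congrArg (fun t => t.val.val) hab
    exact Fin.ext this
  have hcard := Nat.card_le_card_of_injective _ hinj
  rw [Nat.card_eq_fintype_card (α := Fin (p+1)), Fintype.card_fin, hperm] at hcard
  omega

end CMBAux


namespace CMBAux

open Matrix Complex

lemma expst (θ : ℝ) : star (Complex.exp ((θ : ℂ) * Complex.I))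
    = Complex.exp (((-θ : ℝ) : ℂ) * Complex.I) := by
  rw [Complex.star_def, ← Complex.exp_conj, _root_.map_mul, Complex.conj_ofReal, Complex.conj_I]
  push_cast
  ring_nf

lemma expmul (θ φ : ℝ) : Complex.exp ((θ : ℂ) * Complex.I) * Complex.exp ((φ : ℂ) * Complex.I)
    = Complex.exp (((θ + φ : ℝ) : ℂ) * Complex.I) := by
  rw [← Complex.exp_add]
  push_cast
  ring_nf

lemma expunit (θ : ℝ) : star (Complex.exp ((θ : ℂ) * Complex.I))
    * Complex.exp ((θ : ℂ) * Complex.I) = 1 := by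
  rw [expst, expmul]
  norm_num

lemma sum_two {n : ℕ} {β : Type*} [AddCommMonoid β] {u v : Fin n} (huv : u ≠ v)
    (f : Fin n → β) (hsupp : ∀ w, w ≠ u → w ≠ v → f w = 0) : ∑ w, f w = f u + f v := by
  rw [← Finset.sum_pair huv]
  refine (Finset.sum_subset (Finset.subset_univ _) ?_).symm
  intro x _ hx
  simp only [Finset.mem_insert, Finset.mem_singleton] at hx
  push_neg at hx
  exact hsupp x hx.1 hx.2

lemma out_spec {n : ℕ} {G : SimpleGraph (Fin n)} {e : Sym2 (Fin n)} (he : e ∈ G.edgeSet) :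
    G.Adj (Quot.out e).1 (Quot.out e).2 ∧ s((Quot.out e).1, (Quot.out e).2) = e := by
  have h1 : s((Quot.out e).1, (Quot.out e).2) = e := by
    exact Quot.out_eq e
  refine ⟨?_, h1⟩
  rw [← h1] at he
  exact he

/-- The oriented incidence-type matrix of the magnetic Laplacian. -/
noncomputable def dmat {n : ℕ} (G : SimpleGraph (Fin n)) (α : Fin n → Fin n → ℝ) :
    Matrix ↥G.edgeSet (Fin n) ℂ := fun e w =>
  if w = (Quot.out e.val).1 then 1
  else if w = (Quot.out e.val).2 then
    -Complex.exp ((α (Quot.out e.val).1 (Quot.out e.val).2 : ℂ) * Complex.I) else 0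

lemma dmat_support {n : ℕ} {G : SimpleGraph (Fin n)} {α : Fin n → Fin n → ℝ}
    {e : ↥G.edgeSet} {w : Fin n} (h : dmat G α e w ≠ 0) : w ∈ e.val := by
  obtain ⟨hadj, h1⟩ := out_spec e.prop
  rw [dmat] at h
  by_cases hu : w = (Quot.out e.val).1
  · rw [← h1, hu]; exact Sym2.mem_mk_left _ _
  · by_cases hv : w = (Quot.out e.val).2
    · rw [← h1, hv]; exact Sym2.mem_mk_right _ _
    · rw [if_neg hu, if_neg hv] at h; exact absurd rfl h

end CMBAux

namespace CMBAux

open Matrix Complex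

lemma magLap_factor {n : ℕ} (G : SimpleGraph (Fin n)) [Fintype ↥G.edgeSet]
    (α : Fin n → Fin n → ℝ) (hα : ∀ u v, α v u = -α u v) :
    magLap G α = (dmat G α)ᴴ * dmat G α := by
  ext w w'
  rw [Matrix.mul_apply]
  simp only [Matrix.conjTranspose_apply]
  by_cases hww : w = w'
  · subst hww
    have hterm : ∀ e : ↥G.edgeSet, star (dmat G α e w) * dmat G α e w
        = if w ∈ e.val then 1 else 0 := by
      intro e
      obtain ⟨hadj, h1⟩ := out_spec e.prop
      have hmem : w ∈ e.val ↔ w = (Quot.out e.val).1 ∨ w = (Quot.out e.val).2 := by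
        have h2 := Sym2.mem_iff (a := w) (b := (Quot.out e.val).1) (c := (Quot.out e.val).2)
        rw [h1] at h2
        exact h2
      simp only [dmat]
      by_cases hu : w = (Quot.out e.val).1
      · rw [if_pos hu, if_pos (hmem.mpr (Or.inl hu))]
        simp
      · rw [if_neg hu]
        by_cases hv : w = (Quot.out e.val).2
        · rw [if_pos hv, if_pos (hmem.mpr (Or.inr hv)), star_neg, neg_mul, mul_neg,
            neg_neg, expunit]
        · rw [if_neg hv, if_neg (fun h => (hmem.mp h).elim hu hv)]
          simp
    rw [Finset.sum_congr rfl (fun e _ => hterm e), Finset.sum_boole]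
    have hcard : (Finset.univ.filter (fun e : ↥G.edgeSet => w ∈ e.val)).card
        = (G.neighborSet w).ncard := by
      have e1 : {e : ↥G.edgeSet // w ∈ e.val} ≃ ↥(G.incidenceSet w) :=
        { toFun := fun t => ⟨t.val.val, t.val.prop, t.prop⟩
          invFun := fun s => ⟨⟨s.val, s.prop.1⟩, s.prop.2⟩
          left_inv := fun t => rfl
          right_inv := fun s => rfl }
      calc (Finset.univ.filter (fun e : ↥G.edgeSet => w ∈ e.val)).card
          = Fintype.card {e : ↥G.edgeSet // w ∈ e.val} := (Fintype.card_subtype _).symm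
        _ = Nat.card {e : ↥G.edgeSet // w ∈ e.val} := Nat.card_eq_fintype_card.symm
        _ = Nat.card ↥(G.incidenceSet w) := Nat.card_congr e1
        _ = Nat.card ↥(G.neighborSet w) :=
            Nat.card_congr (G.incidenceSetEquivNeighborSet w)
        _ = (G.neighborSet w).ncard := Nat.card_coe_set_eq _
    rw [hcard]
    simp [magLap]
  · have key : ∀ e : ↥G.edgeSet, e.val ≠ s(w, w') →
        star (dmat G α e w) * dmat G α e w' = 0 := by
      intro e hne
      obtain ⟨hadj, h1⟩ := out_spec e.prop
      simp only [dmat]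
      by_cases hu : w = (Quot.out e.val).1
      · by_cases hv' : w' = (Quot.out e.val).2
        · exfalso
          apply hne
          rw [← h1, ← hu, ← hv']
        · have h2 : ¬ w' = (Quot.out e.val).1 := fun h => hww (hu.trans h.symm)
          simp only [if_neg h2, if_neg hv', mul_zero]
      · by_cases hv : w = (Quot.out e.val).2
        · by_cases hu' : w' = (Quot.out e.val).1
          · exfalso
            apply hne
            rw [← h1, ← hu', ← hv, Sym2.eq_swap]
          · have h2 : ¬ w' = (Quot.out e.val).2 := fun h => hww (hv.trans h.symm)
            simp only [if_neg hu', if_neg h2, mul_zero]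
        · simp only [if_neg hu, if_neg hv, star_zero, zero_mul]
    by_cases hadj : G.Adj w w'
    · have he₀ : s(w, w') ∈ G.edgeSet := G.mem_edgeSet.mpr hadj
      rw [Finset.sum_eq_single (⟨s(w, w'), he₀⟩ : ↥G.edgeSet)]
      · have hp : s((Quot.out (s(w, w') : Sym2 (Fin n))).1,
            (Quot.out (s(w, w') : Sym2 (Fin n))).2) = s(w, w') := (out_spec he₀).2
        have hLHS : magLap G α w w' = -Complex.exp ((α w w' : ℂ) * Complex.I) := by
          simp [magLap, hww, hadj]
        rw [hLHS]
        simp only [dmat]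
        rcases Sym2.eq_iff.mp hp with ⟨hp1, hp2⟩ | ⟨hp1, hp2⟩
        · rw [if_pos hp1.symm]
          have h2 : ¬ w' = (Quot.out (s(w, w') : Sym2 (Fin n))).1 :=
            fun h => hww (h.trans hp1).symm
          rw [if_neg h2, if_pos hp2.symm, hp1, hp2]
          simp
        · have h2 : ¬ w = (Quot.out (s(w, w') : Sym2 (Fin n))).1 :=
            fun h => hww (h.trans hp1)
          rw [if_neg h2, if_pos hp2.symm, if_pos hp1.symm, hp1, hp2, star_neg, expst]
          have hneg : ((-α w' w : ℝ) : ℂ) = ((α w w' : ℝ) : ℂ) := by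
            rw [hα w w']
            push_cast
            ring
          rw [hneg]
          simp
      · intro e _ hne
        exact key e (fun hval => hne (Subtype.ext hval))
      · intro h
        exact absurd (Finset.mem_univ _) h
    · rw [Finset.sum_eq_zero]
      · simp [magLap, hww, hadj]
      · intro e _
        refine key e (fun hval => hadj ?_)
        rw [← G.mem_edgeSet, ← hval]
        exact e.prop

end CMBAux

namespace CMBAux

open Matrix Complex

variable {n : ℕ} {G : SimpleGraph (Fin n)}

lemma matching_disj {M : G.Subgraph} (hM : M.IsMatching) {e1 e2 : Sym2 (Fin n)}
    (h1 : e1 ∈ M.edgeSet) (h2 : e2 ∈ M.edgeSet) {w : Fin n}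
    (hw1 : w ∈ e1) (hw2 : w ∈ e2) : e1 = e2 := by
  obtain ⟨b1, rfl⟩ := Sym2.mem_iff_exists.mp hw1
  obtain ⟨b2, rfl⟩ := Sym2.mem_iff_exists.mp hw2
  rw [SimpleGraph.Subgraph.mem_edgeSet] at h1 h2
  obtain ⟨b, _, huniq⟩ := hM (M.edge_vert h1)
  rw [huniq b1 h1, huniq b2 h2]

/-- inclusion of subgraph edges into graph edges -/
def inclE (M : G.Subgraph) : ↥M.edgeSet → ↥G.edgeSet :=
  fun t => ⟨t.val, M.edgeSet_subset t.prop⟩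

lemma inclE_injective (M : G.Subgraph) : Function.Injective (inclE M) := by
  intro a b hab
  have h2 : (inclE M a).val = (inclE M b).val := congrArg Subtype.val hab
  exact Subtype.ext h2

/-- coordinate inclusion matrix -/
noncomputable def Jmat (M : G.Subgraph) : Matrix ↥G.edgeSet ↥M.edgeSet ℂ :=
  fun e t => if e = inclE M t then 1 else 0

/-- matrix of "antisymmetric" edge vectors -/
noncomputable def Xmat (α : Fin n → Fin n → ℝ) (M : G.Subgraph) :
    Matrix (Fin n) ↥M.edgeSet ℂ := fun w t =>
  if w = (Quot.out t.val).1 then 1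
  else if w = (Quot.out t.val).2 then
    -Complex.exp ((α (Quot.out t.val).2 (Quot.out t.val).1 : ℂ) * Complex.I) else 0

lemma Xmat_support {α : Fin n → Fin n → ℝ} {M : G.Subgraph} {t : ↥M.edgeSet} {w : Fin n}
    (h : Xmat α M w t ≠ 0) : w ∈ t.val := by
  have hGe : t.val ∈ G.edgeSet := M.edgeSet_subset t.prop
  obtain ⟨hadj, h1⟩ := out_spec hGe
  rw [Xmat] at h
  by_cases hu : w = (Quot.out t.val).1
  · rw [← h1, hu]; exact Sym2.mem_mk_left _ _
  · by_cases hv : w = (Quot.out t.val).2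
    · rw [← h1, hv]; exact Sym2.mem_mk_right _ _
    · rw [if_neg hu, if_neg hv] at h; exact absurd rfl h

end CMBAux

namespace CMBAux

open Matrix Complex

variable {n : ℕ} {G : SimpleGraph (Fin n)} [Fintype ↥G.edgeSet]
  {α : Fin n → Fin n → ℝ} {M : G.Subgraph} [Fintype ↥M.edgeSet]

lemma Jmat_orth (M : G.Subgraph) [Fintype ↥M.edgeSet] :
    (Jmat M)ᴴ * Jmat M = (1 : Matrix ↥M.edgeSet ↥M.edgeSet ℂ) := by
  ext t t'
  rw [Matrix.mul_apply]
  simp only [Matrix.conjTranspose_apply]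
  rw [Finset.sum_eq_single (inclE M t)]
  · by_cases h : t = t'
    · subst h
      simp [Jmat, Matrix.one_apply]
    · have hne : inclE M t ≠ inclE M t' := fun hc => h (inclE_injective M hc)
      simp [Jmat, hne, Matrix.one_apply, h]
  · intro e _ hne
    simp only [Jmat, if_neg hne, star_zero, zero_mul]
  · intro h
    exact absurd (Finset.mem_univ _) h

lemma ddT_entry (hM : M.IsMatching) (t t' : ↥M.edgeSet) :
    ((dmat G α) * (dmat G α)ᴴ) (inclE M t) (inclE M t')
      = if t = t' then 2 else 0 := by
  rw [Matrix.mul_apply]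
  simp only [Matrix.conjTranspose_apply]
  by_cases h : t = t'
  · subst h
    rw [if_pos rfl]
    obtain ⟨hadj, h1⟩ := out_spec (inclE M t).prop
    have huv := hadj.ne
    have e1 : dmat G α (inclE M t) (Quot.out (inclE M t).val).1 = 1 := by
      simp [dmat]
    have e2 : dmat G α (inclE M t) (Quot.out (inclE M t).val).2
        = -Complex.exp ((α (Quot.out (inclE M t).val).1 (Quot.out (inclE M t).val).2 : ℂ)
            * Complex.I) := by
      simp [dmat, Ne.symm huv]
    rw [sum_two huv (fun w => dmat G α (inclE M t) w * star (dmat G α (inclE M t) w))]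
    · rw [e1, e2, star_one, mul_one, star_neg, neg_mul_neg, mul_comm, expunit]
      norm_num
    · intro w hwu hwv
      simp only [dmat, if_neg hwu, if_neg hwv, zero_mul]
  · rw [if_neg h]
    refine Finset.sum_eq_zero fun w _ => ?_
    rcases eq_or_ne (dmat G α (inclE M t) w) 0 with h0 | h0
    · rw [h0, zero_mul]
    · rcases eq_or_ne (dmat G α (inclE M t') w) 0 with h0' | h0'
      · rw [h0', star_zero, mul_zero]
      · exfalso
        have hw1 := dmat_support h0
        have hw2 := dmat_support h0'
        exact h (Subtype.ext (matching_disj hM t.prop t'.prop hw1 hw2))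

lemma Xmat_orth (hM : M.IsMatching) :
    (Xmat α M)ᴴ * Xmat α M = (2 : ℂ) • (1 : Matrix ↥M.edgeSet ↥M.edgeSet ℂ) := by
  ext t t'
  rw [Matrix.mul_apply]
  simp only [Matrix.conjTranspose_apply, Matrix.smul_apply, Matrix.one_apply]
  by_cases h : t = t'
  · subst h
    rw [if_pos rfl]
    obtain ⟨hadj, h1⟩ := out_spec (M.edgeSet_subset t.prop)
    have huv := hadj.ne
    have e1 : Xmat α M (Quot.out t.val).1 t = 1 := by
      simp [Xmat]
    have e2 : Xmat α M (Quot.out t.val).2 t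
        = -Complex.exp ((α (Quot.out t.val).2 (Quot.out t.val).1 : ℂ) * Complex.I) := by
      simp [Xmat, Ne.symm huv]
    rw [sum_two huv (fun w => star (Xmat α M w t) * Xmat α M w t)]
    · rw [e1, e2, star_one, one_mul, star_neg, neg_mul_neg, expunit]
      norm_num
    · intro w hwu hwv
      simp only [Xmat, if_neg hwu, if_neg hwv, star_zero, zero_mul]
  · rw [if_neg h]
    simp only [smul_zero]
    refine Finset.sum_eq_zero fun w _ => ?_
    rcases eq_or_ne (Xmat α M w t) 0 with h0 | h0
    · rw [h0, star_zero, zero_mul]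
    · rcases eq_or_ne (Xmat α M w t') 0 with h0' | h0'
      · rw [h0', mul_zero]
      · exfalso
        have hw1 := Xmat_support h0
        have hw2 := Xmat_support h0'
        exact h (Subtype.ext (matching_disj hM t.prop t'.prop hw1 hw2))

lemma dX_entry (hM : M.IsMatching) (hα : ∀ u v, α v u = -α u v) (t t' : ↥M.edgeSet) :
    ((dmat G α) * Xmat α M) (inclE M t) t' = if t = t' then 2 else 0 := by
  rw [Matrix.mul_apply]
  by_cases h : t = t'
  · subst h
    rw [if_pos rfl]
    obtain ⟨hadj, h1⟩ := out_spec (M.edgeSet_subset t.prop)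
    have huv := hadj.ne
    have hval : (inclE M t).val = t.val := rfl
    have e1 : dmat G α (inclE M t) (Quot.out t.val).1 = 1 := by
      simp [dmat, hval]
    have e2 : dmat G α (inclE M t) (Quot.out t.val).2
        = -Complex.exp ((α (Quot.out t.val).1 (Quot.out t.val).2 : ℂ) * Complex.I) := by
      simp [dmat, hval, Ne.symm huv]
    have e1x : Xmat α M (Quot.out t.val).1 t = 1 := by
      simp [Xmat]
    have e2x : Xmat α M (Quot.out t.val).2 t
        = -Complex.exp ((α (Quot.out t.val).2 (Quot.out t.val).1 : ℂ) * Complex.I) := by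
      simp [Xmat, Ne.symm huv]
    rw [sum_two huv (fun w => dmat G α (inclE M t) w * Xmat α M w t)]
    · rw [e1, e2, e1x, e2x, one_mul, neg_mul_neg, expmul]
      rw [show α (Quot.out t.val).1 (Quot.out t.val).2
          + α (Quot.out t.val).2 (Quot.out t.val).1 = 0 by
        rw [hα (Quot.out t.val).1 (Quot.out t.val).2]; ring]
      norm_num
    · intro w hwu hwv
      simp only [dmat, Xmat, hval, if_neg hwu, if_neg hwv, zero_mul]
  · rw [if_neg h]
    refine Finset.sum_eq_zero fun w _ => ?_
    rcases eq_or_ne (dmat G α (inclE M t) w) 0 with h0 | h0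
    · rw [h0, zero_mul]
    · rcases eq_or_ne (Xmat α M w t') 0 with h0' | h0'
      · rw [h0', mul_zero]
      · exfalso
        have hw1 := dmat_support h0
        have hw2 := Xmat_support h0'
        exact h (Subtype.ext (matching_disj hM t.prop t'.prop hw1 hw2))

end CMBAux

namespace CMBAux

open Matrix Complex

variable {n : ℕ} {G : SimpleGraph (Fin n)} [Fintype ↥G.edgeSet]
  {α : Fin n → Fin n → ℝ} {M : G.Subgraph} [Fintype ↥M.edgeSet]

lemma card_split {ι : Type*} [Fintype ι] (p : ι → Prop) :
    Nat.card {x // p x} + Nat.card {x // ¬ p x} = Fintype.card ι := by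
  classical
  rw [Nat.card_eq_fintype_card, Nat.card_eq_fintype_card, Fintype.card_subtype_compl]
  have := Fintype.card_subtype_le p
  omega

lemma mul_two_re (z : ℂ) : ((2 : ℂ) * z).re = 2 * z.re := by
  simp [Complex.mul_re]

lemma JBJ (hM : M.IsMatching) :
    (Jmat M)ᴴ * ((dmat G α) * (dmat G α)ᴴ) * Jmat M
      = (2 : ℂ) • (1 : Matrix ↥M.edgeSet ↥M.edgeSet ℂ) := by
  ext t t'
  rw [Matrix.mul_apply]
  have hterm : ∀ e : ↥G.edgeSet,
      ((Jmat M)ᴴ * ((dmat G α) * (dmat G α)ᴴ)) t e * Jmat M e t'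
        = if e = inclE M t' then ((Jmat M)ᴴ * ((dmat G α) * (dmat G α)ᴴ)) t e else 0 := by
    intro e
    rw [Jmat]
    simp only [mul_ite, mul_one, mul_zero]
  rw [Finset.sum_congr rfl (fun e _ => hterm e), Finset.sum_ite_eq' Finset.univ]
  rw [if_pos (Finset.mem_univ _), Matrix.mul_apply]
  have hterm2 : ∀ e1 : ↥G.edgeSet,
      (Jmat M)ᴴ t e1 * ((dmat G α) * (dmat G α)ᴴ) e1 (inclE M t')
        = if e1 = inclE M t then ((dmat G α) * (dmat G α)ᴴ) e1 (inclE M t') else 0 := by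
    intro e1
    rw [Matrix.conjTranspose_apply, Jmat]
    by_cases h : e1 = inclE M t
    · rw [if_pos h, if_pos h]
      simp
    · rw [if_neg h, if_neg h]
      simp
  rw [Finset.sum_congr rfl (fun e1 _ => hterm2 e1), Finset.sum_ite_eq' Finset.univ,
    if_pos (Finset.mem_univ _), ddT_entry hM]
  by_cases h : t = t'
  · subst h
    simp [Matrix.one_apply]
  · rw [if_neg h]
    simp [Matrix.one_apply, h]

lemma count_B_le (hM : M.IsMatching) :
    M.edgeSet.ncard ≤ Nat.card {j //
      (Matrix.isHermitian_mul_conjTranspose_self (dmat G α)).eigenvalues j ≤ 2} := by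
  classical
  set S := LinearMap.range ((Jmat M).mulVecLin) with hS
  have hnsq : ∀ c : ↥M.edgeSet → ℂ,
      star (Jmat M *ᵥ c) ⬝ᵥ (Jmat M *ᵥ c) = star c ⬝ᵥ c := by
    intro c
    rw [dotTrans, Jmat_orth, Matrix.one_mulVec]
  have hq : ∀ c : ↥M.edgeSet → ℂ,
      star (Jmat M *ᵥ c) ⬝ᵥ (((dmat G α) * (dmat G α)ᴴ) *ᵥ (Jmat M *ᵥ c))
        = (2 : ℂ) * (star c ⬝ᵥ c) := by
    intro c
    rw [Matrix.mulVec_mulVec, dotTrans, ← Matrix.mul_assoc, JBJ hM,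
      Matrix.smul_mulVec, Matrix.one_mulVec, dotProduct_smul]
    rfl
  have hform : ∀ x ∈ S, (star x ⬝ᵥ (((dmat G α) * (dmat G α)ᴴ) *ᵥ x)).re
      ≤ 2 * (star x ⬝ᵥ x).re := by
    rintro x ⟨c, rfl⟩
    have h1 : (Jmat M).mulVecLin c = Jmat M *ᵥ c := rfl
    rw [h1, hq c, hnsq c, mul_two_re]
  have hinj : Function.Injective ((Jmat M).mulVecLin) := by
    rw [← LinearMap.ker_eq_bot, LinearMap.ker_eq_bot']
    intro c hc
    have h1 : (Jmat M).mulVecLin c = Jmat M *ᵥ c := rfl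
    rw [h1] at hc
    have h2 : (Jmat M)ᴴ *ᵥ (Jmat M *ᵥ c) = 0 := by rw [hc, Matrix.mulVec_zero]
    rw [Matrix.mulVec_mulVec, Jmat_orth, Matrix.one_mulVec] at h2
    exact h2
  have hrank : Module.finrank ℂ S = M.edgeSet.ncard := by
    rw [hS, LinearMap.finrank_range_of_inj hinj, Module.finrank_fintype_fun_eq_card,
      ← Nat.card_eq_fintype_card, Nat.card_coe_set_eq]
  have := cf_le (Matrix.isHermitian_mul_conjTranspose_self (dmat G α)) 2 S hform
  rw [hrank] at this
  exact this

lemma count_A_ge (hα : ∀ u v, α v u = -α u v) (hA : (magLap G α).IsHermitian)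
    (hM : M.IsMatching) :
    M.edgeSet.ncard ≤ Nat.card {i // 2 ≤ hA.eigenvalues i} := by
  classical
  set S := LinearMap.range ((Xmat α M).mulVecLin) with hS
  have hnormSq2 : Complex.normSq 2 = 4 := by
    simp [Complex.normSq_apply]
    norm_num
  have hnsq : ∀ c : ↥M.edgeSet → ℂ,
      (star (Xmat α M *ᵥ c) ⬝ᵥ (Xmat α M *ᵥ c)).re
        = 2 * ∑ t, Complex.normSq (c t) := by
    intro c
    rw [dotTrans, Xmat_orth hM, Matrix.smul_mulVec, Matrix.one_mulVec,
      dotProduct_smul]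
    have h2 : (2 : ℂ) • (star c ⬝ᵥ c) = (2 : ℂ) * (star c ⬝ᵥ c) := rfl
    rw [h2, mul_two_re, nsqForm]
  have hval : ∀ (c : ↥M.edgeSet → ℂ) (t : ↥M.edgeSet),
      (((dmat G α) * Xmat α M) *ᵥ c) (inclE M t) = 2 * c t := by
    intro c t
    have h1 : (((dmat G α) * Xmat α M) *ᵥ c) (inclE M t)
        = ∑ t', ((dmat G α) * Xmat α M) (inclE M t) t' * c t' := rfl
    rw [h1, Finset.sum_congr rfl (fun t' _ => by rw [dX_entry hM hα, ite_mul, zero_mul]),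
      Finset.sum_ite_eq Finset.univ, if_pos (Finset.mem_univ _)]
  have hq : ∀ c : ↥M.edgeSet → ℂ,
      4 * ∑ t, Complex.normSq (c t)
        ≤ (star (Xmat α M *ᵥ c) ⬝ᵥ ((magLap G α) *ᵥ (Xmat α M *ᵥ c))).re := by
    intro c
    rw [magLap_factor G α hα, factor_q, nsqForm, Matrix.mulVec_mulVec]
    have h2 := Finset.sum_image (s := (Finset.univ : Finset ↥M.edgeSet)) (g := inclE M)
      (f := fun e => Complex.normSq ((((dmat G α) * Xmat α M) *ᵥ c) e))
      (fun a _ b _ hab => inclE_injective M hab)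
    have h3 : ∑ t : ↥M.edgeSet,
        Complex.normSq ((((dmat G α) * Xmat α M) *ᵥ c) (inclE M t))
        ≤ ∑ e, Complex.normSq ((((dmat G α) * Xmat α M) *ᵥ c) e) := by
      rw [← h2]
      exact Finset.sum_le_sum_of_subset_of_nonneg (Finset.subset_univ _)
        (fun e _ _ => Complex.normSq_nonneg _)
    refine le_trans ?_ h3
    rw [Finset.mul_sum]
    refine le_of_eq (Finset.sum_congr rfl fun t _ => ?_)
    rw [hval c t, Complex.normSq_mul, hnormSq2]
  have hform : ∀ x ∈ S, 2 * (star x ⬝ᵥ x).re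
      ≤ (star x ⬝ᵥ ((magLap G α) *ᵥ x)).re := by
    rintro x ⟨c, rfl⟩
    have h1 : (Xmat α M).mulVecLin c = Xmat α M *ᵥ c := rfl
    rw [h1, hnsq c]
    calc 2 * (2 * ∑ t, Complex.normSq (c t)) = 4 * ∑ t, Complex.normSq (c t) := by ring
      _ ≤ _ := hq c
  have hinj : Function.Injective ((Xmat α M).mulVecLin) := by
    rw [← LinearMap.ker_eq_bot, LinearMap.ker_eq_bot']
    intro c hc
    have h1 : (Xmat α M).mulVecLin c = Xmat α M *ᵥ c := rfl
    rw [h1] at hc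
    have h2 : (Xmat α M)ᴴ *ᵥ (Xmat α M *ᵥ c) = 0 := by rw [hc, Matrix.mulVec_zero]
    rw [Matrix.mulVec_mulVec, Xmat_orth hM, Matrix.smul_mulVec,
      Matrix.one_mulVec] at h2
    have h3 := smul_eq_zero.mp h2
    rcases h3 with h3 | h3
    · exact absurd h3 two_ne_zero
    · exact h3
  have hrank : Module.finrank ℂ S = M.edgeSet.ncard := by
    rw [hS, LinearMap.finrank_range_of_inj hinj, Module.finrank_fintype_fun_eq_card,
      ← Nat.card_eq_fintype_card, Nat.card_coe_set_eq]
  have := cf_ge hA 2 S hform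
  rw [hrank] at this
  exact this

end CMBAux

/-- For a connected graph `G` on `n` vertices with `m` edges,
matching number `μ(G)` and any magnetic potential `α`:
`λ_{μ(G)+n-m}(Δ_α^G) ≤ 2 ≤ λ_{n-μ(G)+1}(Δ_α^G)`. -/
theorem connected_matching_bounds {n m : ℕ} (G : SimpleGraph (Fin n)) (hG : G.Connected)
    (hm : G.edgeSet.ncard = m)
    (α : Fin n → Fin n → ℝ) (hα : ∀ u v, α v u = -α u v) :
    lamb (magLap_isHermitian G α hα) (matchingNumber G + n - m) ≤ ((2 : ℝ) : EReal) ∧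
    ((2 : ℝ) : EReal) ≤ lamb (magLap_isHermitian G α hα) (n - matchingNumber G + 1) := by
  classical
  -- a maximum matching
  have hbot : (⊥ : G.Subgraph).IsMatching := by
    intro v hv
    simp only [SimpleGraph.Subgraph.verts_bot, Set.mem_empty_iff_false] at hv
  have h0mem : 0 ∈ {k : ℕ | ∃ M : G.Subgraph, M.IsMatching ∧ M.edgeSet.ncard = 0} := by
    exact ⟨⊥, hbot, by simp [SimpleGraph.Subgraph.edgeSet_bot]⟩
  have hub : ∀ k ∈ {k : ℕ | ∃ M : G.Subgraph, M.IsMatching ∧ M.edgeSet.ncard = k}, k ≤ m := by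
    rintro k ⟨M, hM, rfl⟩
    rw [← hm]
    exact Set.ncard_le_ncard (M.edgeSet_subset) (G.edgeSet.toFinite)
  have hmem : matchingNumber G ∈
      {k : ℕ | ∃ M : G.Subgraph, M.IsMatching ∧ M.edgeSet.ncard = k} := by
    rw [matchingNumber]
    exact Nat.sSup_mem ⟨0, ⟨⊥, hbot, by simp [SimpleGraph.Subgraph.edgeSet_bot]⟩⟩ ⟨m, hub⟩
  obtain ⟨M, hM, hMcard⟩ := hmem
  have hμm : matchingNumber G ≤ m := by
    refine hub _ ⟨M, hM, hMcard⟩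
  haveI : Fintype ↥G.edgeSet := Fintype.ofFinite _
  haveI : Fintype ↥M.edgeSet := Fintype.ofFinite _
  have hcET : Fintype.card ↥G.edgeSet = m := by
    rw [← Nat.card_eq_fintype_card, Nat.card_coe_set_eq, hm]
  constructor
  · -- first inequality
    by_cases hk0 : matchingNumber G + n ≤ m
    · rw [lamb, dif_neg (by omega), if_pos (by omega)]
      exact bot_le
    · have h1k : 1 ≤ matchingNumber G + n - m := by omega
      have hkn : matchingNumber G + n - m ≤ n := by omega
      have cB : matchingNumber G ≤ Nat.card {j //
          (Matrix.isHermitian_mul_conjTranspose_self (CMBAux.dmat G α)).eigenvalues j ≤ 2} := by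
        rw [← hMcard]
        exact CMBAux.count_B_le hM
      have cT := CMBAux.cf_transfer (magLap_isHermitian G α hα) (CMBAux.dmat G α)
        (CMBAux.magLap_factor G α hα) 2 (by norm_num)
      have splitB := CMBAux.card_split (fun j =>
        (Matrix.isHermitian_mul_conjTranspose_self (CMBAux.dmat G α)).eigenvalues j ≤ 2)
      have congB : Nat.card {j // ¬ (Matrix.isHermitian_mul_conjTranspose_self
            (CMBAux.dmat G α)).eigenvalues j ≤ 2}
          = Nat.card {j // 2 < (Matrix.isHermitian_mul_conjTranspose_self
            (CMBAux.dmat G α)).eigenvalues j} :=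
        Nat.card_congr (Equiv.subtypeEquivRight (fun j => not_le))
      have splitA := CMBAux.card_split (fun i =>
        (magLap_isHermitian G α hα).eigenvalues i ≤ 2)
      have congA : Nat.card {i // ¬ (magLap_isHermitian G α hα).eigenvalues i ≤ 2}
          = Nat.card {i // 2 < (magLap_isHermitian G α hα).eigenvalues i} :=
        Nat.card_congr (Equiv.subtypeEquivRight (fun i => not_le))
      rw [congB, hcET] at splitB
      rw [congA, Fintype.card_fin] at splitA
      have hcount : matchingNumber G + n - m
          ≤ Nat.card {i // (magLap_isHermitian G α hα).eigenvalues i ≤ 2} := by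
        omega
      rw [lamb, dif_pos ⟨h1k, hkn⟩]
      exact EReal.coe_le_coe_iff.mpr
        (CMBAux.sorted_le (magLap_isHermitian G α hα).eigenvalues 2
          (matchingNumber G + n - m) h1k hkn hcount)
  · -- second inequality
    by_cases hμ0 : matchingNumber G = 0
    · rw [lamb, dif_neg (by omega), if_neg (by omega)]
      exact le_top
    · have hμ1 : 1 ≤ matchingNumber G := Nat.one_le_iff_ne_zero.mpr hμ0
      have hn1 : 1 ≤ n := by
        have hne : M.edgeSet.Nonempty := by
          apply Set.nonempty_of_ncard_ne_zero
          omega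
        obtain ⟨e, he⟩ := hne
        have : Nonempty (Fin n) := ⟨(Quot.out e).1⟩
        exact Fin.pos_iff_nonempty.mpr this
      have cA : matchingNumber G ≤ Nat.card {i //
          2 ≤ (magLap_isHermitian G α hα).eigenvalues i} := by
        rw [← hMcard]
        exact CMBAux.count_A_ge hα (magLap_isHermitian G α hα) hM
      have splitA := CMBAux.card_split (fun i =>
        (magLap_isHermitian G α hα).eigenvalues i < 2)
      have congA : Nat.card {i // ¬ (magLap_isHermitian G α hα).eigenvalues i < 2}
          = Nat.card {i // 2 ≤ (magLap_isHermitian G α hα).eigenvalues i} :=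
        Nat.card_congr (Equiv.subtypeEquivRight (fun i => not_lt))
      rw [congA, Fintype.card_fin] at splitA
      have hcount : Nat.card {i // (magLap_isHermitian G α hα).eigenvalues i < 2}
          ≤ n - matchingNumber G + 1 - 1 := by
        omega
      rw [lamb, dif_pos ⟨by omega, by omega⟩]
      exact EReal.coe_le_coe_iff.mpr
        (CMBAux.sorted_ge (magLap_isHermitian G α hα).eigenvalues 2
          (n - matchingNumber G + 1 - 1) (by omega) hcount)
end

section
/- Let G be a finite connected simple graph on n vertices, where n is even. If there exists a magnetic potential α on G such that λ_{n/2+1}(Δ_α^G) < 2, then G has no perfect matching. -/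
namespace SpecObstr

variable {n : ℕ} {G : SimpleGraph (Fin n)} {M : G.Subgraph}

noncomputable def pm (hM : M.IsPerfectMatching) (v : Fin n) : Fin n :=
  (hM.1 (hM.2 v)).choose

lemma pm_adj (hM : M.IsPerfectMatching) (v : Fin n) : M.Adj v (pm hM v) :=
  (hM.1 (hM.2 v)).choose_spec.1

lemma pm_eq (hM : M.IsPerfectMatching) {v w : Fin n} (h : M.Adj v w) : w = pm hM v :=
  (hM.1 (hM.2 v)).choose_spec.2 w h

lemma pm_invol (hM : M.IsPerfectMatching) (v : Fin n) : pm hM (pm hM v) = v :=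
  ((pm_eq hM (pm_adj hM v).symm)).symm

lemma pm_adjG (hM : M.IsPerfectMatching) (v : Fin n) : G.Adj v (pm hM v) :=
  M.adj_sub (pm_adj hM v)

lemma pm_ne (hM : M.IsPerfectMatching) (v : Fin n) : pm hM v ≠ v :=
  fun h => (G.loopless.irrefl v) (by simpa [h] using pm_adjG hM v)

open Finset in
lemma magLap_mulVec (G : SimpleGraph (Fin n)) (α : Fin n → Fin n → ℝ)
    (x : Fin n → ℂ) (v : Fin n) [DecidableRel G.Adj] :
    (magLap G α).mulVec x v
      = (G.degree v : ℂ) * x v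
        + ∑ u ∈ G.neighborFinset v, -(Complex.exp (α v u * Complex.I)) * x u := by
  classical
  have hpt : ∀ u, magLap G α v u * x u
      = (if u = v then (G.degree v : ℂ) * x u else 0)
        + (if G.Adj v u then -(Complex.exp (α v u * Complex.I)) * x u else 0) := by
    intro u
    simp only [magLap, Matrix.of_apply]
    by_cases h1 : v = u
    · subst h1
      simp [SimpleGraph.degree, SimpleGraph.neighborFinset,
        Set.ncard_eq_toFinset_card' ]
    · have h1' : ¬ u = v := fun h => h1 h.symm
      rw [if_neg h1, if_neg h1']
      by_cases h2 : G.Adj v u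
      · simp [h2]
      · simp [h2]
  unfold Matrix.mulVec dotProduct
  rw [Finset.sum_congr rfl (fun u _ => hpt u), Finset.sum_add_distrib]
  congr 1
  · simp
  · rw [SimpleGraph.neighborFinset_eq_filter, Finset.sum_filter]

lemma pm_eq_iff (hM : M.IsPerfectMatching) (u v : Fin n) :
    u = pm hM v ↔ v = pm hM u := by
  constructor <;> · intro h; rw [h, pm_invol]

open Finset Complex in
lemma quad_lower [DecidableRel G.Adj] (hM : M.IsPerfectMatching) (α : Fin n → Fin n → ℝ)
    (x : Fin n → ℂ)
    (hx : ∀ v, x (pm hM v) = -Complex.exp ((-(α v (pm hM v)) : ℝ) * Complex.I) * x v) :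
    2 * ∑ v, Complex.normSq (x v)
      ≤ (∑ v, (starRingEnd ℂ) (x v) * ((magLap G α).mulVec x v)).re := by
  classical
  set s : Fin n → ℝ := fun v => Complex.normSq (x v) with hs
  set E : Fin n → Finset (Fin n) := fun v => (G.neighborFinset v).erase (pm hM v) with hE
  set r : Fin n → Fin n → ℝ :=
    fun v u => ((starRingEnd ℂ) (x v) * (-(Complex.exp (α v u * Complex.I)) * x u)).re with hr
  have hmem : ∀ v, pm hM v ∈ G.neighborFinset v := by
    intro v; rw [SimpleGraph.mem_neighborFinset]; exact pm_adjG hM v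
  -- rewrite the quadratic form
  have hre : (∑ v, (starRingEnd ℂ) (x v) * ((magLap G α).mulVec x v)).re
      = ∑ v, ((G.degree v : ℝ) * s v + s v + ∑ u ∈ E v, r v u) := by
    rw [Complex.re_sum]
    refine Finset.sum_congr rfl fun v _ => ?_
    rw [magLap_mulVec G α x v, mul_add, Finset.mul_sum, Complex.add_re, Complex.re_sum]
    have h1 : ((starRingEnd ℂ) (x v) * ((G.degree v : ℂ) * x v)).re
        = (G.degree v : ℝ) * s v := by
      have he : (starRingEnd ℂ) (x v) * ((G.degree v : ℂ) * x v)
          = (((G.degree v : ℝ) * Complex.normSq (x v) : ℝ) : ℂ) := by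
        push_cast
        rw [show (starRingEnd ℂ) (x v) * ((G.degree v : ℂ) * x v)
            = ((G.degree v : ℂ)) * (x v * (starRingEnd ℂ) (x v)) by ring, Complex.mul_conj]
      rw [he, Complex.ofReal_re, hs]
    have hsplit : ∑ u ∈ G.neighborFinset v,
        ((starRingEnd ℂ) (x v) * (-(Complex.exp (α v u * Complex.I)) * x u)).re
        = r v (pm hM v) + ∑ u ∈ E v, r v u := by
      rw [hE]
      exact (Finset.add_sum_erase _ (fun u => r v u) (hmem v)).symm
    have h2 : r v (pm hM v) = s v := by
      show ((starRingEnd ℂ) (x v) *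
          (-(Complex.exp (α v (pm hM v) * Complex.I)) * x (pm hM v))).re = Complex.normSq (x v)
      rw [hx v]
      have he : (starRingEnd ℂ) (x v) * (-(Complex.exp (α v (pm hM v) * Complex.I)) *
          (-Complex.exp (((-(α v (pm hM v))) : ℝ) * Complex.I) * x v))
          = (x v * (starRingEnd ℂ) (x v)) *
            (Complex.exp ((α v (pm hM v) : ℂ) * Complex.I
              + ((-(α v (pm hM v)) : ℝ) : ℂ) * Complex.I)) := by
        rw [Complex.exp_add]; push_cast; ring
      rw [he, Complex.mul_conj]
      push_cast
      rw [show ((α v (pm hM v) : ℂ)) * Complex.I + -(α v (pm hM v) : ℂ) * Complex.I = 0 by ring,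
        Complex.exp_zero, mul_one, Complex.ofReal_re]
    rw [hsplit, h2, h1]; ring
  rw [hre]
  -- lower bound each adjacency term
  have hbound : ∀ v, ∀ u ∈ E v, -((s v + s u) / 2) ≤ r v u := by
    intro v u _
    have habs : ‖(starRingEnd ℂ) (x v) *
        (-(Complex.exp (α v u * Complex.I)) * x u)‖ = ‖x v‖ * ‖x u‖ := by
      rw [norm_mul, norm_mul, norm_neg, Complex.norm_conj, Complex.norm_exp_ofReal_mul_I]
      ring
    have h1 : -(‖x v‖ * ‖x u‖) ≤ r v u := by
      have h0 := abs_le.mp (Complex.abs_re_le_norm ((starRingEnd ℂ) (x v) *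
        (-(Complex.exp (α v u * Complex.I)) * x u)))
      rw [habs] at h0
      exact h0.1
    refine le_trans ?_ h1
    have h2 : 2 * ‖x v‖ * ‖x u‖
        ≤ ‖x v‖ ^ 2 + ‖x u‖ ^ 2 := two_mul_le_add_sq _ _
    rw [Complex.sq_norm, Complex.sq_norm] at h2
    have hsv : s v = Complex.normSq (x v) := rfl
    have hsu : s u = Complex.normSq (x u) := rfl
    rw [hsv, hsu]
    linarith
  have hsum_le : ∑ v, ((G.degree v : ℝ) * s v + s v - ∑ u ∈ E v, (s v + s u) / 2)
      ≤ ∑ v, ((G.degree v : ℝ) * s v + s v + ∑ u ∈ E v, r v u) := by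
    refine Finset.sum_le_sum fun v _ => ?_
    have hneg : -∑ u ∈ E v, (s v + s u) / 2 ≤ ∑ u ∈ E v, r v u := by
      rw [← Finset.sum_neg_distrib]
      exact Finset.sum_le_sum (hbound v)
    linarith
  refine le_trans ?_ hsum_le
  -- now an exact computation
  have hswap : ∑ v, ∑ u ∈ E v, s u = ∑ v, ∑ u ∈ E v, s v := by
    rw [Finset.sum_comm' (t' := Finset.univ) (s' := fun u => E u)
      (fun v u => by
        simp only [Finset.mem_univ, true_and, and_true, hE, Finset.mem_erase,
          SimpleGraph.mem_neighborFinset]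
        constructor
        · rintro ⟨h1, h2⟩
          exact ⟨fun hc => h1 ((pm_eq_iff hM v u).mp hc), h2.symm⟩
        · rintro ⟨h1, h2⟩
          exact ⟨fun hc => h1 ((pm_eq_iff hM u v).mp hc), h2.symm⟩)]
  have hEsum : ∀ v, ∑ u ∈ E v, s v = (G.degree v : ℝ) * s v - s v := by
    intro v
    rw [Finset.sum_const, nsmul_eq_mul]
    have hcard : ((G.neighborFinset v).erase (pm hM v)).card + 1 = G.degree v := by
      rw [Finset.card_erase_add_one (hmem v)]
      rfl
    have h3 : (((G.neighborFinset v).erase (pm hM v)).card : ℝ) = (G.degree v : ℝ) - 1 := by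
      rw [← hcard]; push_cast; ring
    have hEv : E v = (G.neighborFinset v).erase (pm hM v) := rfl
    rw [hEv, h3]; ring
  have stepA : ∀ v, ∑ u ∈ E v, (s v + s u) / 2
      = ((∑ u ∈ E v, s v) + ∑ u ∈ E v, s u) / 2 := by
    intro v
    rw [← Finset.sum_add_distrib, ← Finset.sum_div]
  have hhalf : ∑ v, ∑ u ∈ E v, (s v + s u) / 2 = ∑ v, ((G.degree v : ℝ) * s v - s v) :=
    calc ∑ v, ∑ u ∈ E v, (s v + s u) / 2
        = ∑ v, ((∑ u ∈ E v, s v) + ∑ u ∈ E v, s u) / 2 :=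
          Finset.sum_congr rfl fun v _ => stepA v
      _ = ((∑ v, ∑ u ∈ E v, s v) + ∑ v, ∑ u ∈ E v, s u) / 2 := by
          rw [← Finset.sum_add_distrib, ← Finset.sum_div]
      _ = ∑ v, ∑ u ∈ E v, s v := by rw [hswap]; ring
      _ = ∑ v, ((G.degree v : ℝ) * s v - s v) := Finset.sum_congr rfl fun v _ => hEsum v
  have final : ∑ v, ((G.degree v : ℝ) * s v + s v - ∑ u ∈ E v, (s v + s u) / 2)
      = 2 * ∑ v, s v := by
    rw [Finset.sum_sub_distrib, hhalf, Finset.sum_add_distrib, Finset.sum_sub_distrib]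
    ring
  exact final.ge

end SpecObstr

namespace SpecObstr

variable {n : ℕ} {G : SimpleGraph (Fin n)} {M : G.Subgraph}

open Finset in
lemma two_card_T (hM : M.IsPerfectMatching) :
    2 * (Finset.univ.filter (fun v => v < pm hM v)).card = n := by
  classical
  have hsplit := Finset.card_filter_add_card_filter_not
    (s := (Finset.univ : Finset (Fin n))) (fun v => v < pm hM v)
  have hneg : Finset.univ.filter (fun v => ¬ v < pm hM v)
      = Finset.univ.filter (fun v => pm hM v < v) := by
    ext v
    simp only [Finset.mem_filter, Finset.mem_univ, true_and, not_lt]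
    constructor
    · intro hle; exact lt_of_le_of_ne hle (pm_ne hM v)
    · intro hlt; exact le_of_lt hlt
  have hbij : (Finset.univ.filter (fun v => v < pm hM v)).card
      = (Finset.univ.filter (fun v => pm hM v < v)).card := by
    refine Finset.card_nbij (pm hM) ?_ ?_ ?_
    · intro v hv
      simp only [Finset.coe_filter, Set.mem_setOf_eq, Finset.mem_filter, Finset.mem_univ,
        true_and] at *
      rw [pm_invol]
      exact hv
    · intro a _ b _ hab
      have := congrArg (pm hM) hab
      rwa [pm_invol, pm_invol] at this
    · intro w hw
      simp only [Finset.coe_filter, Set.mem_setOf_eq, Finset.mem_univ, true_and,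
        Set.mem_image] at *
      refine ⟨pm hM w, ?_, pm_invol hM w⟩
      rw [pm_invol]
      exact hw
  rw [Finset.card_univ, Fintype.card_fin] at hsplit
  rw [hneg] at hsplit
  omega

open Classical in
/-- The embedding of "half space" vectors. -/
noncomputable def phi (hM : M.IsPerfectMatching) (α : Fin n → Fin n → ℝ)
    (c : {v : Fin n // v < pm hM v} → ℂ) : Fin n → ℂ :=
  fun v =>
    if h : v < pm hM v then c ⟨v, h⟩
    else -Complex.exp ((-(α (pm hM v) v) : ℝ) * Complex.I) *
      c ⟨pm hM v, by
        rw [pm_invol]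
        exact lt_of_le_of_ne (not_lt.mp h) (pm_ne hM v)⟩

lemma phi_add (hM : M.IsPerfectMatching) (α : Fin n → Fin n → ℝ)
    (a c : {v : Fin n // v < pm hM v} → ℂ) :
    phi hM α (a + c) = phi hM α a + phi hM α c := by
  funext v
  simp only [phi, Pi.add_apply]
  split_ifs with h
  · rfl
  · ring

lemma phi_smul (hM : M.IsPerfectMatching) (α : Fin n → Fin n → ℝ)
    (k : ℂ) (c : {v : Fin n // v < pm hM v} → ℂ) :
    phi hM α (k • c) = k • phi hM α c := by
  funext v
  simp only [phi, Pi.smul_apply, smul_eq_mul]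
  split_ifs with h
  · rfl
  · ring

lemma phi_apply_of_lt (hM : M.IsPerfectMatching) (α : Fin n → Fin n → ℝ)
    (c : {v : Fin n // v < pm hM v} → ℂ) {v : Fin n} (h : v < pm hM v) :
    phi hM α c v = c ⟨v, h⟩ := by
  simp only [phi]
  rw [dif_pos h]

lemma phi_prop (hM : M.IsPerfectMatching) (α : Fin n → Fin n → ℝ)
    (hα : ∀ u v, α v u = -α u v)
    (c : {v : Fin n // v < pm hM v} → ℂ) (v : Fin n) :
    phi hM α c (pm hM v)
      = -Complex.exp ((-(α v (pm hM v)) : ℝ) * Complex.I) * phi hM α c v := by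
  classical
  by_cases h : v < pm hM v
  · have hnot : ¬ pm hM v < pm hM (pm hM v) := by
      rw [pm_invol]
      exact not_lt.mpr (le_of_lt h)
    rw [phi_apply_of_lt hM α c h]
    simp only [phi]
    rw [dif_neg hnot]
    simp only [pm_invol]
  · have hlt : pm hM v < v := lt_of_le_of_ne (not_lt.mp h) (pm_ne hM v)
    have hlt' : pm hM v < pm hM (pm hM v) := by rw [pm_invol]; exact hlt
    rw [phi_apply_of_lt hM α c hlt']
    simp only [phi]
    rw [dif_neg h]
    have hα' : α (pm hM v) v = -(α v (pm hM v)) := hα v (pm hM v)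
    rw [show -Complex.exp ((-(α v (pm hM v)) : ℝ) * Complex.I) *
        (-Complex.exp ((-(α (pm hM v) v) : ℝ) * Complex.I) *
          c ⟨pm hM v, hlt'⟩)
        = Complex.exp (((-(α v (pm hM v)) : ℝ) : ℂ) * Complex.I
            + ((-(α (pm hM v) v) : ℝ) : ℂ) * Complex.I) * c ⟨pm hM v, hlt'⟩ by
      rw [Complex.exp_add]; ring]
    rw [hα']
    push_cast
    rw [show -(α v (pm hM v) : ℂ) * Complex.I + -(-(α v (pm hM v) : ℂ)) * Complex.I = 0 by ring,
      Complex.exp_zero, one_mul]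

end SpecObstr
namespace SpecObstr

open Finset in
lemma key_expand {n : ℕ} {A : Matrix (Fin n) (Fin n) ℂ} (hA : A.IsHermitian)
    (x : EuclideanSpace ℂ (Fin n)) :
    ∑ v, (starRingEnd ℂ) (x v) * A.mulVec x v
      = ∑ i, (hA.eigenvalues i : ℂ) * (Complex.normSq (hA.eigenvectorBasis.repr x i) : ℂ) := by
  classical
  set b := hA.eigenvectorBasis with hbdef
  set μ := hA.eigenvalues with hμdef
  set c : Fin n → ℂ := fun i => b.repr x i with hcdef
  have hb : ∀ i, A.mulVec (fun v => b i v) = fun v => (μ i : ℂ) * b i v := by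
    intro i
    have h := hA.mulVec_eigenvectorBasis i
    funext v
    have h2 := congrFun h v
    simpa [Complex.real_smul] using h2
  have hxv : ∀ v, x v = ∑ i, c i * b i v := by
    intro v
    conv_lhs => rw [← b.sum_repr x]
    rw [WithLp.ofLp_sum, Finset.sum_apply]
    rfl
  have hAx : ∀ v, A.mulVec x v = ∑ i, c i * ((μ i : ℂ) * b i v) := by
    intro v
    unfold Matrix.mulVec dotProduct
    calc ∑ u, A v u * x u = ∑ u, A v u * ∑ i, c i * b i u :=
          Finset.sum_congr rfl fun u _ => by rw [← hxv u]
      _ = ∑ u, ∑ i, c i * (A v u * b i u) := Finset.sum_congr rfl fun u _ => by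
          rw [Finset.mul_sum]
          exact Finset.sum_congr rfl fun i _ => by ring
      _ = ∑ i, ∑ u, c i * (A v u * b i u) := Finset.sum_comm
      _ = ∑ i, c i * ∑ u, A v u * b i u := Finset.sum_congr rfl fun i _ => by
          rw [Finset.mul_sum]
      _ = ∑ i, c i * ((μ i : ℂ) * b i v) := Finset.sum_congr rfl fun i _ => by
          have := congrFun (hb i) v
          unfold Matrix.mulVec dotProduct at this
          rw [this]
  have hinner : ∀ i, ∑ v, (starRingEnd ℂ) (x v) * b i v = (starRingEnd ℂ) (c i) := by
    intro i
    have h1 : c i = ∑ v, (starRingEnd ℂ) (b i v) * x v := by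
      rw [hcdef]
      simp only []
      rw [b.repr_apply_apply, PiLp.inner_apply]
      exact Finset.sum_congr rfl fun v _ => by rw [RCLike.inner_apply, mul_comm]
    rw [h1, map_sum]
    exact Finset.sum_congr rfl fun v _ => by
      rw [map_mul, Complex.conj_conj]
      ring
  calc ∑ v, (starRingEnd ℂ) (x v) * A.mulVec x v
      = ∑ v, ∑ i, (c i * (μ i : ℂ)) * ((starRingEnd ℂ) (x v) * b i v) :=
        Finset.sum_congr rfl fun v _ => by
          rw [hAx v, Finset.mul_sum]
          exact Finset.sum_congr rfl fun i _ => by ring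
    _ = ∑ i, (c i * (μ i : ℂ)) * ∑ v, (starRingEnd ℂ) (x v) * b i v := by
        rw [Finset.sum_comm]
        exact Finset.sum_congr rfl fun i _ => by rw [Finset.mul_sum]
    _ = ∑ i, (μ i : ℂ) * (Complex.normSq (c i) : ℂ) := Finset.sum_congr rfl fun i _ => by
        rw [hinner i, show c i * (μ i : ℂ) * (starRingEnd ℂ) (c i)
          = (μ i : ℂ) * (c i * (starRingEnd ℂ) (c i)) by ring, Complex.mul_conj]

open Finset in
lemma sum_normSq_eq {n : ℕ} {A : Matrix (Fin n) (Fin n) ℂ} (hA : A.IsHermitian)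
    (x : EuclideanSpace ℂ (Fin n)) :
    ∑ v, Complex.normSq (x v) = ∑ i, Complex.normSq (hA.eigenvectorBasis.repr x i) := by
  have h1 : ((∑ v, Complex.normSq (x v) : ℝ) : ℂ) = ∑ v, (starRingEnd ℂ) (x v) * x v := by
    push_cast
    exact Finset.sum_congr rfl fun v _ => by rw [Complex.normSq_eq_conj_mul_self]
  have h2 : ((∑ i, Complex.normSq (hA.eigenvectorBasis.repr x i) : ℝ) : ℂ)
      = ∑ i, (starRingEnd ℂ) (hA.eigenvectorBasis.repr x i) * hA.eigenvectorBasis.repr x i := by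
    push_cast
    exact Finset.sum_congr rfl fun i _ => by rw [Complex.normSq_eq_conj_mul_self]
  have h3 : (inner ℂ x x : ℂ) = (inner ℂ (hA.eigenvectorBasis.repr x) (hA.eigenvectorBasis.repr x) : ℂ) :=
    (hA.eigenvectorBasis.repr.inner_map_map x x).symm
  rw [PiLp.inner_apply, PiLp.inner_apply] at h3
  simp only [RCLike.inner_apply, mul_comm _ ((starRingEnd ℂ) _)] at h3
  have := h1.trans (h3.trans h2.symm)
  exact_mod_cast this

end SpecObstr

namespace SpecObstr

open Finset in
lemma repr_eq_sum {n : ℕ} {A : Matrix (Fin n) (Fin n) ℂ} (hA : A.IsHermitian)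
    (x : EuclideanSpace ℂ (Fin n)) (i : Fin n) :
    hA.eigenvectorBasis.repr x i
      = ∑ v, (starRingEnd ℂ) (hA.eigenvectorBasis i v) * x v := by
  rw [OrthonormalBasis.repr_apply_apply, PiLp.inner_apply]
  exact Finset.sum_congr rfl fun v _ => by rw [RCLike.inner_apply, mul_comm]

end SpecObstr

open SpecObstr in
/-- If `G` is a connected graph on an even number `n` of vertices and
some magnetic potential `α` satisfies `λ_{n/2+1}(Δ_α^G) < 2`, then `G` has no perfect
matching. -/
theorem spectral_obstruction_matching {n : ℕ} (G : SimpleGraph (Fin n)) (hG : G.Connected)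
    (hn : Even n) (α : Fin n → Fin n → ℝ) (hα : ∀ u v, α v u = -α u v)
    (h : lamb (magLap_isHermitian G α hα) (n / 2 + 1) < ((2 : ℝ) : EReal)) :
    ¬ ∃ M : G.Subgraph, M.IsPerfectMatching := by
  classical
  rintro ⟨M, hM⟩
  by_cases hn0 : n = 0
  · subst hn0
    unfold lamb at h
    rw [dif_neg (by omega), if_neg (by omega)] at h
    exact absurd h (by simp)
  have hn1 : 1 ≤ n := Nat.pos_of_ne_zero hn0
  obtain ⟨m, hm⟩ := hn
  have hhalf : n / 2 + 1 ≤ n := by omega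
  set hA := magLap_isHermitian G α hα with hAdef
  set μ := hA.eigenvalues with hμdef
  set b := hA.eigenvectorBasis with hbdef
  -- the sorted eigenvalue bound
  unfold lamb at h
  rw [dif_pos ⟨by omega, hhalf⟩] at h
  set j0 : Fin n := ⟨n / 2, by omega⟩ with hj0
  have hsorted : μ (Tuple.sort μ j0) < 2 := by exact_mod_cast h
  -- the set of small eigenvalues is large
  set S : Finset (Fin n) := Finset.univ.filter (fun i => μ i < 2) with hS
  have hScard : n / 2 + 1 ≤ S.card := by
    have hsub : (Finset.Iic j0).image (Tuple.sort μ) ⊆ S := by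
      intro j hj
      obtain ⟨j', hj', rfl⟩ := Finset.mem_image.mp hj
      rw [hS, Finset.mem_filter]
      refine ⟨Finset.mem_univ _, lt_of_le_of_lt ?_ hsorted⟩
      exact Tuple.monotone_sort μ (Finset.mem_Iic.mp hj')
    have hcard : ((Finset.Iic j0).image (Tuple.sort μ)).card = n / 2 + 1 := by
      rw [Finset.card_image_of_injective _ (Tuple.sort μ).injective, Fin.card_Iic]
    rw [← hcard]
    exact Finset.card_le_card hsub
  -- the matching half-space has dimension n/2
  have hTcard : Fintype.card {v : Fin n // v < pm hM v} = n / 2 := by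
    rw [Fintype.card_subtype]
    have := two_card_T hM
    omega
  -- the coefficient map
  set Ψ : ({v : Fin n // v < pm hM v} → ℂ) →ₗ[ℂ] ({i : Fin n // ¬ μ i < 2} → ℂ) :=
    { toFun := fun c j => ∑ v, (starRingEnd ℂ) (b j.1 v) * phi hM α c v
      map_add' := fun a c => by
        funext j
        show ∑ v, (starRingEnd ℂ) (b j.1 v) * phi hM α (a + c) v = _
        rw [phi_add hM α a c]
        show _ = (∑ v, (starRingEnd ℂ) (b j.1 v) * phi hM α a v)
          + ∑ v, (starRingEnd ℂ) (b j.1 v) * phi hM α c v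
        rw [← Finset.sum_add_distrib]
        exact Finset.sum_congr rfl fun v _ => by
          rw [Pi.add_apply]; ring
      map_smul' := fun k c => by
        funext j
        show ∑ v, (starRingEnd ℂ) (b j.1 v) * phi hM α (k • c) v = _
        rw [phi_smul hM α k c]
        show _ = k * ∑ v, (starRingEnd ℂ) (b j.1 v) * phi hM α c v
        rw [Finset.mul_sum]
        exact Finset.sum_congr rfl fun v _ => by
          rw [Pi.smul_apply, smul_eq_mul]; ring } with hΨ
  -- Ψ is not injective by dimension count
  have hnotinj : ¬ Function.Injective Ψ := by
    intro hinj
    have hle := LinearMap.finrank_le_finrank_of_injective hinj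
    rw [Module.finrank_fintype_fun_eq_card, Module.finrank_fintype_fun_eq_card] at hle
    rw [hTcard, Fintype.card_subtype] at hle
    have htot := Finset.card_filter_add_card_filter_not
      (s := (Finset.univ : Finset (Fin n))) (fun i => μ i < 2)
    rw [Finset.card_univ, Fintype.card_fin] at htot
    have hSeq : (Finset.filter (fun i => μ i < 2) Finset.univ).card = S.card := rfl
    rw [hSeq] at htot
    omega
  obtain ⟨c1, c2, hc12, hne⟩ := Function.not_injective_iff.mp hnotinj
  set c := c1 - c2 with hc
  have hc0 : c ≠ 0 := sub_ne_zero.mpr hne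
  have hker : Ψ c = 0 := by rw [hc, map_sub, hc12, sub_self]
  -- the test vector
  set x : Fin n → ℂ := phi hM α c with hx
  -- its eigencoefficients vanish outside S
  have hcoef : ∀ i : Fin n, ¬ μ i < 2 → b.repr (WithLp.toLp 2 x) i = 0 := by
    intro i hi
    rw [repr_eq_sum]
    have := congrFun hker ⟨i, hi⟩
    exact this
  -- x is nonzero somewhere
  obtain ⟨t, ht⟩ : ∃ t : {v : Fin n // v < pm hM v}, c t ≠ 0 := by
    by_contra hall
    push_neg at hall
    exact hc0 (funext fun t => hall t)
  have hxt : x t.1 ≠ 0 := by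
    rw [hx, phi_apply_of_lt hM α c t.2]
    exact ht
  -- quadratic form bounds
  have hlow : 2 * ∑ v, Complex.normSq (x v)
      ≤ (∑ v, (starRingEnd ℂ) (x v) * ((magLap G α).mulVec x v)).re :=
    quad_lower hM α x (phi_prop hM α hα c)
  have hexp := key_expand hA (WithLp.toLp 2 x)
  have hnrm := sum_normSq_eq hA (WithLp.toLp 2 x)
  simp only [WithLp.ofLp_toLp] at hexp hnrm
  have hre : (∑ v, (starRingEnd ℂ) (x v) * ((magLap G α).mulVec x v)).re
      = ∑ i, μ i * Complex.normSq (b.repr (WithLp.toLp 2 x) i) := by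
    rw [hexp, Complex.re_sum]
    refine Finset.sum_congr rfl fun i _ => ?_
    rw [show (μ i : ℂ) * (Complex.normSq (b.repr (WithLp.toLp 2 x) i) : ℂ)
      = ((μ i * Complex.normSq (b.repr (WithLp.toLp 2 x) i) : ℝ) : ℂ) by push_cast; ring, Complex.ofReal_re]
  -- strict upper bound
  have hpos : 0 < ∑ i, Complex.normSq (b.repr (WithLp.toLp 2 x) i) := by
    rw [← hnrm]
    refine Finset.sum_pos' (fun v _ => Complex.normSq_nonneg _) ⟨t.1, Finset.mem_univ _, ?_⟩
    exact Complex.normSq_pos.mpr hxt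
  obtain ⟨i0, -, hi0⟩ : ∃ i ∈ Finset.univ, 0 < Complex.normSq (b.repr (WithLp.toLp 2 x) i) := by
    by_contra hall
    push_neg at hall
    have hz : ∑ i, Complex.normSq (b.repr (WithLp.toLp 2 x) i) = 0 :=
      Finset.sum_eq_zero fun i hi => le_antisymm (hall i hi) (Complex.normSq_nonneg _)
    rw [hz] at hpos
    exact lt_irrefl 0 hpos
  have hup : ∑ i, μ i * Complex.normSq (b.repr (WithLp.toLp 2 x) i)
      < 2 * ∑ i, Complex.normSq (b.repr (WithLp.toLp 2 x) i) := by
    rw [Finset.mul_sum]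
    refine Finset.sum_lt_sum (fun i _ => ?_) ⟨i0, Finset.mem_univ _, ?_⟩
    · by_cases hi : μ i < 2
      · exact mul_le_mul_of_nonneg_right (le_of_lt hi) (Complex.normSq_nonneg _)
      · rw [hcoef i hi]
        simp
    · have hμi0 : μ i0 < 2 := by
        by_contra hi
        rw [hcoef i0 hi] at hi0
        simp at hi0
      exact (mul_lt_mul_of_pos_right hμi0 hi0)
  rw [hre, hnrm] at hlow
  linarith
end

section
/- Let G be a finite connected simple graph on n vertices with m edges and matching number μ(G), and let α be any magnetic potential on G. If n > 2μ(G), then λ_{μ(G)+n-m}(Δ_α^G) < 2 < λ_{n-μ(G)+1}(Δ_α^G). -/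
open Complex Finset Matrix

noncomputable def mphase {n : ℕ} (α : Fin n → Fin n → ℝ) (u v : Fin n) : ℂ :=
  Complex.exp ((α u v : ℂ) * Complex.I)

lemma normSq_mphase {n : ℕ} (α : Fin n → Fin n → ℝ) (u v : Fin n) :
    Complex.normSq (mphase α u v) = 1 := by
  rw [Complex.normSq_eq_norm_sq, mphase, Complex.norm_exp_ofReal_mul_I]; norm_num

lemma mul_conj_mphase {n : ℕ} (α : Fin n → Fin n → ℝ) (u v : Fin n) :
    mphase α u v * (starRingEnd ℂ) (mphase α u v) = 1 := by
  rw [Complex.mul_conj, normSq_mphase]; norm_num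

lemma conj_mphase {n : ℕ} {α : Fin n → Fin n → ℝ} (hα : ∀ u v, α v u = -α u v)
    (u v : Fin n) : (starRingEnd ℂ) (mphase α u v) = mphase α v u := by
  rw [mphase, mphase, ← Complex.exp_conj]
  congr 1
  simp [Complex.conj_ofReal, hα u v]

lemma mphase_mul_mphase {n : ℕ} {α : Fin n → Fin n → ℝ} (hα : ∀ u v, α v u = -α u v)
    (u v : Fin n) : mphase α u v * mphase α v u = 1 := by
  rw [mphase, mphase, ← Complex.exp_add, hα u v]
  push_cast
  ring_nf
  exact Complex.exp_zero

section Quad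

variable {n : ℕ} (G : SimpleGraph (Fin n)) (α : Fin n → Fin n → ℝ)

open scoped Classical

lemma term_expand (x : Fin n → ℂ) (u v : Fin n) :
    ((Complex.normSq (x u - mphase α u v * x v) : ℝ) : ℂ) =
      x u * (starRingEnd ℂ) (x u) + x v * (starRingEnd ℂ) (x v)
        - mphase α u v * x v * (starRingEnd ℂ) (x u)
        - (starRingEnd ℂ) (mphase α u v) * (starRingEnd ℂ) (x v) * x u := by
  rw [← Complex.mul_conj]
  simp only [map_sub, _root_.map_mul]
  linear_combination (x v * (starRingEnd ℂ) (x v)) * mul_conj_mphase α u v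

lemma deg_eq_card (u : Fin n) :
    (G.neighborSet u).ncard = (Finset.univ.filter (fun v => G.Adj u v)).card := by
  rw [SimpleGraph.neighborSet, Set.ncard_eq_toFinset_card', Set.toFinset_setOf]

lemma magLap_quad (hα : ∀ u v, α v u = -α u v) (x : Fin n → ℂ) :
    ((∑ u, ∑ v, if G.Adj u v then Complex.normSq (x u - mphase α u v * x v) else 0 : ℝ) : ℂ)
      = 2 * (star x ⬝ᵥ (magLap G α) *ᵥ x) := by
  set A1 : ℂ := ∑ u, ∑ v, if G.Adj u v then x u * (starRingEnd ℂ) (x u) else 0 with hA1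
  set A2 : ℂ := ∑ u, ∑ v, if G.Adj u v then x v * (starRingEnd ℂ) (x v) else 0 with hA2
  set A3 : ℂ := ∑ u, ∑ v,
      if G.Adj u v then mphase α u v * x v * (starRingEnd ℂ) (x u) else 0 with hA3
  set A4 : ℂ := ∑ u, ∑ v,
      if G.Adj u v then (starRingEnd ℂ) (mphase α u v) * (starRingEnd ℂ) (x v) * x u else 0
    with hA4
  have hL : ((∑ u, ∑ v, if G.Adj u v then
      Complex.normSq (x u - mphase α u v * x v) else 0 : ℝ) : ℂ) = A1 + A2 - A3 - A4 := by
    rw [hA1, hA2, hA3, hA4]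
    push_cast
    simp only [← Finset.sum_add_distrib, ← Finset.sum_sub_distrib]
    refine Finset.sum_congr rfl fun u _ => Finset.sum_congr rfl fun v _ => ?_
    by_cases h : G.Adj u v
    · simp only [if_pos h]
      exact term_expand α x u v
    · simp [if_neg h]
  have hA21 : A2 = A1 := by
    rw [hA2, Finset.sum_comm, hA1]
    refine Finset.sum_congr rfl fun u _ => Finset.sum_congr rfl fun v _ => ?_
    by_cases h : G.Adj u v
    · rw [if_pos h, if_pos h.symm]
    · rw [if_neg h, if_neg fun h' => h h'.symm]
  have hA43 : A4 = A3 := by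
    rw [hA4, Finset.sum_comm, hA3]
    refine Finset.sum_congr rfl fun u _ => Finset.sum_congr rfl fun v _ => ?_
    by_cases h : G.Adj u v
    · rw [if_pos h, if_pos h.symm, conj_mphase hα]
      ring
    · rw [if_neg h, if_neg fun h' => h h'.symm]
  have hR : star x ⬝ᵥ (magLap G α) *ᵥ x = A1 - A3 := by
    have expand : star x ⬝ᵥ (magLap G α) *ᵥ x =
        ∑ u, ∑ v, (starRingEnd ℂ) (x u) * ((magLap G α) u v * x v) := by
      rw [dotProduct]
      refine Finset.sum_congr rfl fun u _ => ?_
      rw [Matrix.mulVec, dotProduct, Finset.mul_sum]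
      refine Finset.sum_congr rfl fun v _ => ?_
      simp [Complex.star_def]
    rw [expand]
    have split : ∀ u v : Fin n, (starRingEnd ℂ) (x u) * ((magLap G α) u v * x v) =
        (if u = v then ((G.neighborSet u).ncard : ℂ) * (x u * (starRingEnd ℂ) (x u)) else 0)
          + (if G.Adj u v then -(mphase α u v * x v * (starRingEnd ℂ) (x u)) else 0) := by
      intro u v
      simp only [magLap, Matrix.of_apply]
      by_cases huv : u = v
      · subst huv
        rw [if_pos rfl, if_pos rfl, if_neg (G.irrefl), add_zero]
        ring
      · rw [if_neg huv, if_neg huv, zero_add]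
        by_cases h : G.Adj u v
        · rw [if_pos h, if_pos h, mphase]
          ring
        · rw [if_neg h, if_neg h]
          ring
    simp only [split, Finset.sum_add_distrib]
    have hdiag : (∑ u, ∑ v : Fin n, if u = v then
        ((G.neighborSet u).ncard : ℂ) * (x u * (starRingEnd ℂ) (x u)) else 0) = A1 := by
      rw [hA1]
      refine Finset.sum_congr rfl fun u _ => ?_
      rw [Finset.sum_ite_eq Finset.univ u
        (fun _ => ((G.neighborSet u).ncard : ℂ) * (x u * (starRingEnd ℂ) (x u))),
        if_pos (Finset.mem_univ u)]
      have : (∑ v, if G.Adj u v then x u * (starRingEnd ℂ) (x u) else 0) =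
          ((Finset.univ.filter (fun v => G.Adj u v)).card : ℂ) *
            (x u * (starRingEnd ℂ) (x u)) := by
        rw [← Finset.sum_filter, Finset.sum_const, nsmul_eq_mul]
      rw [this, deg_eq_card]
    have hoff : (∑ u, ∑ v : Fin n, if G.Adj u v then
        -(mphase α u v * x v * (starRingEnd ℂ) (x u)) else 0) = -A3 := by
      rw [hA3, ← Finset.sum_neg_distrib]
      refine Finset.sum_congr rfl fun u _ => ?_
      rw [← Finset.sum_neg_distrib]
      refine Finset.sum_congr rfl fun v _ => ?_
      by_cases h : G.Adj u v
      · rw [if_pos h, if_pos h]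
      · rw [if_neg h, if_neg h, neg_zero]
    rw [hdiag, hoff]
    ring
  rw [hL, hA21, hA43, hR]
  ring

end Quad

section Counting

variable {n : ℕ} {A : Matrix (Fin n) (Fin n) ℂ} (hA : A.IsHermitian)

lemma diag_quad (y : Fin n → ℂ) :
    star y ⬝ᵥ (Matrix.diagonal (RCLike.ofReal ∘ hA.eigenvalues)) *ᵥ y =
      ((∑ i, hA.eigenvalues i * Complex.normSq (y i) : ℝ) : ℂ) := by
  push_cast
  rw [dotProduct]
  refine Finset.sum_congr rfl fun i _ => ?_
  rw [Matrix.mulVec_diagonal]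
  have : (RCLike.ofReal ∘ hA.eigenvalues) i = ((hA.eigenvalues i : ℝ) : ℂ) := rfl
  rw [this]
  have h2 : ((Complex.normSq (y i) : ℝ) : ℂ) = y i * (starRingEnd ℂ) (y i) :=
    (Complex.mul_conj _).symm
  rw [h2]
  simp [Complex.star_def]
  ring

lemma norm_quad (y : Fin n → ℂ) :
    star y ⬝ᵥ y = ((∑ i, Complex.normSq (y i) : ℝ) : ℂ) := by
  push_cast
  rw [dotProduct]
  refine Finset.sum_congr rfl fun i _ => ?_
  have h2 : ((Complex.normSq (y i) : ℝ) : ℂ) = y i * (starRingEnd ℂ) (y i) :=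
    (Complex.mul_conj _).symm
  rw [h2]
  simp [Complex.star_def]
  ring

lemma quad_repr (x : Fin n → ℂ) :
    star x ⬝ᵥ A *ᵥ x =
      ((∑ i, hA.eigenvalues i *
        Complex.normSq ((star (hA.eigenvectorUnitary : Matrix (Fin n) (Fin n) ℂ) *ᵥ x) i) : ℝ) : ℂ) ∧
    star x ⬝ᵥ x =
      ((∑ i, Complex.normSq ((star (hA.eigenvectorUnitary : Matrix (Fin n) (Fin n) ℂ) *ᵥ x) i) : ℝ) : ℂ) := by
  set U : Matrix (Fin n) (Fin n) ℂ := (hA.eigenvectorUnitary : Matrix (Fin n) (Fin n) ℂ) with hU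
  set y : Fin n → ℂ := star U *ᵥ x with hy
  have hsy : star x ᵥ* U = star y := by
    rw [hy, Matrix.star_mulVec]
    simp [Matrix.star_eq_conjTranspose]
  have hUU : U * star U = 1 := (Matrix.mem_unitaryGroup_iff).mp hA.eigenvectorUnitary.2
  constructor
  · conv_lhs => rw [hA.spectral_theorem, Unitary.conjStarAlgAut_apply]
    rw [← hU, ← Matrix.mulVec_mulVec, ← Matrix.mulVec_mulVec, Matrix.dotProduct_mulVec, hsy,
      ← hy]
    exact diag_quad hA y
  · have : star x ⬝ᵥ x = star y ⬝ᵥ y := by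
      rw [hy, ← hsy, ← Matrix.dotProduct_mulVec, Matrix.mulVec_mulVec, hUU, Matrix.one_mulVec]
    rw [this]
    exact norm_quad y

lemma mulVec_eq_zero_imp (x : Fin n → ℂ)
    (h : star (hA.eigenvectorUnitary : Matrix (Fin n) (Fin n) ℂ) *ᵥ x = 0) : x = 0 := by
  have hUU : (hA.eigenvectorUnitary : Matrix (Fin n) (Fin n) ℂ) *
      star (hA.eigenvectorUnitary : Matrix (Fin n) (Fin n) ℂ) = 1 :=
    (Matrix.mem_unitaryGroup_iff).mp hA.eigenvectorUnitary.2
  have : x = ((hA.eigenvectorUnitary : Matrix (Fin n) (Fin n) ℂ) *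
      star (hA.eigenvectorUnitary : Matrix (Fin n) (Fin n) ℂ)) *ᵥ x := by
    rw [hUU, Matrix.one_mulVec]
  rw [this, ← Matrix.mulVec_mulVec, h, Matrix.mulVec_zero]

/-- If the quadratic form of `A` is `< c‖x‖²` on a subspace `W`, then at least
`finrank W` eigenvalues are `< c`. -/
lemma finrank_le_card_lt (c : ℝ) (W : Submodule ℂ (Fin n → ℂ))
    (hW : ∀ x ∈ W, x ≠ 0 → (star x ⬝ᵥ A *ᵥ x).re < c * (star x ⬝ᵥ x).re) :
    Module.finrank ℂ W ≤ (Finset.univ.filter (fun i => hA.eigenvalues i < c)).card := by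
  classical
  set U : Matrix (Fin n) (Fin n) ℂ := (hA.eigenvectorUnitary : Matrix (Fin n) (Fin n) ℂ)
  set S : Finset (Fin n) := Finset.univ.filter (fun i => hA.eigenvalues i < c) with hS
  let φ : W →ₗ[ℂ] (S → ℂ) :=
  { toFun := fun x i => (star U *ᵥ (x : Fin n → ℂ)) (i : Fin n)
    map_add' := by
      intro x y
      funext i
      simp [Matrix.mulVec_add]
    map_smul' := by
      intro c x
      funext i
      simp [Matrix.mulVec_smul] }
  have hinj : Function.Injective φ := by
    rw [← LinearMap.ker_eq_bot, Submodule.eq_bot_iff]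
    rintro ⟨x, hxW⟩ hx
    have hy0 : ∀ i : Fin n, hA.eigenvalues i < c → (star U *ᵥ x) i = 0 := by
      intro i hi
      have := congrFun hx (⟨i, by simp [hS, hi]⟩ : S)
      exact this
    have hx0 : x = 0 := by
      by_contra hne
      have hlt := hW x hxW hne
      have h1 := (quad_repr hA x).1
      have h2 := (quad_repr hA x).2
      rw [h1, h2] at hlt
      simp only [Complex.ofReal_re] at hlt
      have hge : ∑ i, hA.eigenvalues i * Complex.normSq ((star U *ᵥ x) i) ≥
          c * ∑ i, Complex.normSq ((star U *ᵥ x) i) := by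
        rw [Finset.mul_sum]
        refine Finset.sum_le_sum fun i _ => ?_
        by_cases hi : hA.eigenvalues i < c
        · rw [hy0 i hi]
          simp
        · exact mul_le_mul_of_nonneg_right (not_lt.mp hi) (Complex.normSq_nonneg _)
      exact absurd hlt (not_lt.mpr hge)
    simpa using hx0
  calc Module.finrank ℂ W ≤ Module.finrank ℂ (S → ℂ) :=
        LinearMap.finrank_le_finrank_of_injective hinj
    _ = S.card := by rw [Module.finrank_pi]; exact Fintype.card_coe S

/-- Dual version: form `> c‖x‖²` on `W` forces `finrank W` eigenvalues `> c`. -/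
lemma finrank_le_card_gt (c : ℝ) (W : Submodule ℂ (Fin n → ℂ))
    (hW : ∀ x ∈ W, x ≠ 0 → c * (star x ⬝ᵥ x).re < (star x ⬝ᵥ A *ᵥ x).re) :
    Module.finrank ℂ W ≤ (Finset.univ.filter (fun i => c < hA.eigenvalues i)).card := by
  classical
  set U : Matrix (Fin n) (Fin n) ℂ := (hA.eigenvectorUnitary : Matrix (Fin n) (Fin n) ℂ)
  set S : Finset (Fin n) := Finset.univ.filter (fun i => c < hA.eigenvalues i) with hS
  let φ : W →ₗ[ℂ] (S → ℂ) :=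
  { toFun := fun x i => (star U *ᵥ (x : Fin n → ℂ)) (i : Fin n)
    map_add' := by
      intro x y
      funext i
      simp [Matrix.mulVec_add]
    map_smul' := by
      intro c x
      funext i
      simp [Matrix.mulVec_smul] }
  have hinj : Function.Injective φ := by
    rw [← LinearMap.ker_eq_bot, Submodule.eq_bot_iff]
    rintro ⟨x, hxW⟩ hx
    have hy0 : ∀ i : Fin n, c < hA.eigenvalues i → (star U *ᵥ x) i = 0 := by
      intro i hi
      have := congrFun hx (⟨i, by simp [hS, hi]⟩ : S)
      exact this
    have hx0 : x = 0 := by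
      by_contra hne
      have hlt := hW x hxW hne
      have h1 := (quad_repr hA x).1
      have h2 := (quad_repr hA x).2
      rw [h1, h2] at hlt
      simp only [Complex.ofReal_re] at hlt
      have hge : ∑ i, hA.eigenvalues i * Complex.normSq ((star U *ᵥ x) i) ≤
          c * ∑ i, Complex.normSq ((star U *ᵥ x) i) := by
        rw [Finset.mul_sum]
        refine Finset.sum_le_sum fun i _ => ?_
        by_cases hi : c < hA.eigenvalues i
        · rw [hy0 i hi]
          simp
        · exact mul_le_mul_of_nonneg_right (not_lt.mp hi) (Complex.normSq_nonneg _)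
      exact absurd hlt (not_lt.mpr hge)
    simpa using hx0
  calc Module.finrank ℂ W ≤ Module.finrank ℂ (S → ℂ) :=
        LinearMap.finrank_le_finrank_of_injective hinj
    _ = S.card := by rw [Module.finrank_pi]; exact Fintype.card_coe S

end Counting

lemma card_filter_comp_perm {n : ℕ} (σ : Equiv.Perm (Fin n)) (p : Fin n → Prop)
    [DecidablePred p] :
    (Finset.univ.filter (fun i => p (σ i))).card = (Finset.univ.filter p).card := by
  refine Finset.card_bij (fun i _ => σ i) ?_ ?_ ?_
  · intro a ha
    simp only [Finset.mem_filter, Finset.mem_univ, true_and] at ha ⊢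
    exact ha
  · intro a _ b _ h
    exact σ.injective h
  · intro b hb
    refine ⟨σ.symm b, ?_, by simp⟩
    simp only [Finset.mem_filter, Finset.mem_univ, true_and] at hb ⊢
    simpa using hb

lemma sorted_lt_of_card {n : ℕ} {g : Fin n → ℝ} (hg : Monotone g) {c : ℝ} {k : ℕ}
    (hk1 : 1 ≤ k) (hkn : k ≤ n)
    (hcard : k ≤ (Finset.univ.filter (fun i => g i < c)).card) :
    g ⟨k - 1, by omega⟩ < c := by
  by_contra h
  push_neg at h
  have hsub : (Finset.univ.filter (fun i => g i < c)) ⊆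
      Finset.univ.filter (fun i => (i : ℕ) < k - 1) := by
    intro i hi
    simp only [Finset.mem_filter, Finset.mem_univ, true_and] at hi ⊢
    by_contra hik
    push_neg at hik
    have : g ⟨k - 1, by omega⟩ ≤ g i := hg (by rw [Fin.le_def]; simp only [] at hik ⊢; omega)
    linarith
  have hle := Finset.card_le_card hsub
  have : (Finset.univ.filter (fun i : Fin n => (i : ℕ) < k - 1)).card ≤ k - 1 := by
    have : (Finset.univ.filter (fun i : Fin n => (i : ℕ) < k - 1)).card ≤
        (Finset.range (k - 1)).card := by
      refine Finset.card_le_card_of_injOn (fun i => (i : ℕ)) ?_ ?_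
      · intro i hi
        simp only [Finset.mem_coe, Finset.mem_filter, Finset.mem_univ, true_and] at hi
        simpa using hi
      · intro a _ b _ h
        exact Fin.ext h
    simpa using this
  omega

lemma sorted_gt_of_card {n : ℕ} {g : Fin n → ℝ} (hg : Monotone g) {c : ℝ} {k : ℕ}
    (hk1 : 1 ≤ k) (hkn : k ≤ n)
    (hcard : k ≤ (Finset.univ.filter (fun i => c < g i)).card) :
    c < g ⟨n - k, by omega⟩ := by
  by_contra h
  push_neg at h
  have hsub : (Finset.univ.filter (fun i => c < g i)) ⊆
      Finset.univ.filter (fun i : Fin n => n - k < (i : ℕ)) := by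
    intro i hi
    simp only [Finset.mem_filter, Finset.mem_univ, true_and] at hi ⊢
    by_contra hik
    push_neg at hik
    have : g i ≤ g ⟨n - k, by omega⟩ := hg (by rw [Fin.le_def]; simp only [] at hik ⊢; omega)
    linarith
  have hle := Finset.card_le_card hsub
  have : (Finset.univ.filter (fun i : Fin n => n - k < (i : ℕ))).card ≤ k - 1 := by
    have : (Finset.univ.filter (fun i : Fin n => n - k < (i : ℕ))).card ≤
        (Finset.range (k - 1)).card := by
      refine Finset.card_le_card_of_injOn (fun i => (i : ℕ) - (n - k + 1)) ?_ ?_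
      · intro i hi
        simp only [Finset.mem_coe, Finset.mem_filter, Finset.mem_univ, true_and] at hi
        have := i.isLt
        simp only [Finset.mem_coe, Finset.mem_range]
        omega
      · intro a ha b hb h
        simp only [Finset.mem_coe, Finset.mem_filter, Finset.mem_univ, true_and] at ha hb
        have h' : (a : ℕ) - (n - k + 1) = (b : ℕ) - (n - k + 1) := h
        exact Fin.ext (by omega)
    simpa using this
  omega

structure MatchData {n : ℕ} (G : SimpleGraph (Fin n)) (M : G.Subgraph) (μ : ℕ) where
  uu : Fin μ → Fin n
  vv : Fin μ → Fin n
  hadj : ∀ i, M.Adj (uu i) (vv i)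
  hedge : ∀ u v, M.Adj u v → ∃ i, (u = uu i ∧ v = vv i) ∨ (u = vv i ∧ v = uu i)
  hne : ∀ i, uu i ≠ vv i
  hvert : ∀ a, a ∈ M.verts ↔ ∃ i, a = uu i ∨ a = vv i
  hdisj : ∀ i j, i ≠ j → uu i ≠ uu j ∧ uu i ≠ vv j ∧ vv i ≠ uu j ∧ vv i ≠ vv j

lemma exists_matchData {n : ℕ} {G : SimpleGraph (Fin n)} {M : G.Subgraph}
    (hM : M.IsMatching) {μ : ℕ} (hcard : M.edgeSet.ncard = μ) :
    Nonempty (MatchData G M μ) := by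
  classical
  have hFin : M.edgeSet.Finite := Set.toFinite _
  set F : Finset (Sym2 (Fin n)) := hFin.toFinset with hF
  have hFcard : F.card = μ := by
    rw [hF, ← Set.ncard_eq_toFinset_card _ hFin, hcard]
  set ε : Fin μ ≃ {x // x ∈ F} := (Finset.equivFinOfCardEq hFcard).symm with hε
  have hrep : ∀ s : Sym2 (Fin n), ∃ p : Fin n × Fin n, s = s(p.1, p.2) := by
    intro s
    induction s using Sym2.ind with
    | _ a b => exact ⟨(a, b), rfl⟩
  choose p hp using hrep
  set uu : Fin μ → Fin n := fun i => (p (ε i : Sym2 (Fin n))).1 with huu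
  set vv : Fin μ → Fin n := fun i => (p (ε i : Sym2 (Fin n))).2 with hvv
  have hεi : ∀ i, (ε i : Sym2 (Fin n)) = s(uu i, vv i) := fun i => hp _
  have hmem : ∀ i, s(uu i, vv i) ∈ M.edgeSet := by
    intro i
    rw [← hεi]
    have := (ε i).2
    exact (Set.Finite.mem_toFinset hFin).mp this
  have hadj : ∀ i, M.Adj (uu i) (vv i) := fun i =>
    SimpleGraph.Subgraph.mem_edgeSet.mp (hmem i)
  have hsame : ∀ i j, (ε i : Sym2 (Fin n)) = (ε j : Sym2 (Fin n)) → i = j := by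
    intro i j h
    exact ε.injective (Subtype.ext h)
  have hedge : ∀ u v, M.Adj u v → ∃ i, (u = uu i ∧ v = vv i) ∨ (u = vv i ∧ v = uu i) := by
    intro u v huv
    have hmem' : s(u, v) ∈ F := by
      rw [hF, Set.Finite.mem_toFinset]
      exact SimpleGraph.Subgraph.mem_edgeSet.mpr huv
    refine ⟨ε.symm ⟨s(u, v), hmem'⟩, ?_⟩
    have : (ε (ε.symm ⟨s(u, v), hmem'⟩) : Sym2 (Fin n)) = s(u, v) := by
      rw [Equiv.apply_symm_apply]
    rw [hεi] at this
    rcases Sym2.eq_iff.mp this with ⟨h1, h2⟩ | ⟨h1, h2⟩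
    · exact Or.inl ⟨h1.symm, h2.symm⟩
    · exact Or.inr ⟨h2.symm, h1.symm⟩
  have hne : ∀ i, uu i ≠ vv i := fun i => ((hadj i).adj_sub).ne
  have hvert : ∀ a, a ∈ M.verts ↔ ∃ i, a = uu i ∨ a = vv i := by
    intro a
    constructor
    · intro ha
      obtain ⟨w, hw, -⟩ := hM ha
      obtain ⟨i, hi | hi⟩ := hedge a w hw
      · exact ⟨i, Or.inl hi.1⟩
      · exact ⟨i, Or.inr hi.1⟩
    · rintro ⟨i, rfl | rfl⟩
      · exact M.edge_vert (hadj i)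
      · exact M.edge_vert (hadj i).symm
  refine ⟨⟨uu, vv, hadj, hedge, hne, hvert, ?_⟩⟩
  intro i j hij
  refine ⟨?_, ?_, ?_, ?_⟩
  · intro h
    apply hij
    apply hsame
    rw [hεi, hεi]
    have h2 : M.Adj (uu i) (vv j) := by rw [h]; exact hadj j
    have hv : vv i = vv j := (hM (M.edge_vert (hadj i))).unique (hadj i) h2
    rw [h, hv]
  · intro h
    apply hij
    apply hsame
    rw [hεi, hεi]
    have h2 : M.Adj (vv j) (vv i) := by rw [← h]; exact hadj i
    have hv : vv i = uu j := (hM (M.edge_vert (hadj j).symm)).unique h2 (hadj j).symm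
    rw [h, hv]
    exact Sym2.eq_swap
  · intro h
    apply hij
    apply hsame
    rw [hεi, hεi]
    have h2 : M.Adj (uu j) (uu i) := by rw [← h]; exact (hadj i).symm
    have hv : uu i = vv j := (hM (M.edge_vert (hadj j))).unique h2 (hadj j)
    rw [h, hv]
    exact Sym2.eq_swap
  · intro h
    apply hij
    apply hsame
    rw [hεi, hεi]
    have h2 : M.Adj (vv j) (uu i) := by rw [← h]; exact (hadj i).symm
    have hv : uu i = uu j := (hM (M.edge_vert (hadj j).symm)).unique h2 (hadj j).symm
    rw [h, hv]

lemma exists_unmatched {n : ℕ} {G : SimpleGraph (Fin n)} {M : G.Subgraph} {μ : ℕ}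
    (d : MatchData G M μ) (h2μ : 2 * μ < n) : ∃ w, w ∉ M.verts := by
  classical
  by_contra h
  push_neg at h
  have spec : ∀ a : Fin n, ∃ i, a = d.uu i ∨ a = d.vv i := fun a => (d.hvert a).mp (h a)
  choose idx hidx using spec
  have hinj : Function.Injective (fun a : Fin n => (idx a, decide (a = d.uu (idx a)))) := by
    intro a b hab
    rw [Prod.ext_iff] at hab
    obtain ⟨h1, h2⟩ := hab
    simp only at h1 h2
    have ha' := hidx a
    have hb' := hidx b
    rw [h1] at ha' h2
    rw [decide_eq_decide] at h2
    by_cases hu : a = d.uu (idx b)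
    · exact hu.trans (h2.mp hu).symm
    · have ha2 := ha'.resolve_left hu
      have hb2 := hb'.resolve_left (fun hb => hu (h2.mpr hb))
      exact ha2.trans hb2.symm
  have := Fintype.card_le_of_injective _ hinj
  simp [Fintype.card_prod] at this
  omega

lemma exists_adj_of_connected {n : ℕ} {G : SimpleGraph (Fin n)} (hG : G.Connected)
    (hn : 1 < n) : ∃ u v, G.Adj u v := by
  have h01 : (⟨0, by omega⟩ : Fin n) ≠ ⟨1, by omega⟩ := by
    intro h
    simpa using congrArg Fin.val h
  obtain ⟨w⟩ := hG.preconnected ⟨0, by omega⟩ ⟨1, by omega⟩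
  cases w with
  | cons h p => exact ⟨_, _, h⟩

lemma const_of_adj {n : ℕ} {G : SimpleGraph (Fin n)} (hG : G.Connected) (f : Fin n → ℝ)
    (h : ∀ u v, G.Adj u v → f u = f v) (u v : Fin n) : f u = f v := by
  obtain ⟨w⟩ := hG.preconnected u v
  induction w with
  | nil => rfl
  | cons h' p ih => exact (h _ _ h').trans ih

-- real helpers
lemma normSq_sub_le (a b : ℂ) :
    Complex.normSq (a - b) ≤ 2 * Complex.normSq a + 2 * Complex.normSq b := by
  simp only [Complex.normSq_apply, Complex.sub_re, Complex.sub_im]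
  nlinarith [sq_nonneg (a.re + b.re), sq_nonneg (a.im + b.im)]

lemma eq_neg_of_normSq_sub (a b : ℂ)
    (h : Complex.normSq (a - b) = 2 * Complex.normSq a + 2 * Complex.normSq b) :
    a = -b := by
  have h2 : Complex.normSq (a + b) = 0 := by
    simp only [Complex.normSq_apply, Complex.sub_re, Complex.sub_im] at h
    simp only [Complex.normSq_apply, Complex.add_re, Complex.add_im]
    nlinarith
  exact eq_neg_of_add_eq_zero_left (Complex.normSq_eq_zero.mp h2)

section Sides
variable {n μ : ℕ} {G : SimpleGraph (Fin n)} {α : Fin n → Fin n → ℝ} {M : G.Subgraph}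

open scoped Classical

/-- vertex map of a matching datum -/
def pv (d : MatchData G M μ) : Fin μ × Bool → Fin n :=
  fun q => if q.2 then d.uu q.1 else d.vv q.1

lemma pv_inj (d : MatchData G M μ) : Function.Injective (pv d) := by
  rintro ⟨i, bi⟩ ⟨j, bj⟩ h
  by_cases hij : i = j
  · subst hij
    cases bi <;> cases bj <;> simp [pv] at h ⊢
    · exact absurd h.symm (d.hne i)
    · exact absurd h (d.hne i)
  · exfalso
    have hd := d.hdisj i j hij
    cases bi <;> cases bj <;> simp [pv] at h
    · exact hd.2.2.2 h
    · exact hd.2.2.1 h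
    · exact hd.2.1 h
    · exact hd.1 h

/-- ordered matched pairs -/
def pfun (d : MatchData G M μ) : Fin μ × Bool → Fin n × Fin n :=
  fun q => if q.2 then (d.uu q.1, d.vv q.1) else (d.vv q.1, d.uu q.1)

lemma pfun_inj (d : MatchData G M μ) : Function.Injective (pfun d) := by
  rintro ⟨i, bi⟩ ⟨j, bj⟩ h
  by_cases hij : i = j
  · subst hij
    cases bi <;> cases bj <;> simp [pfun, Prod.ext_iff] at h ⊢
    · exact absurd h.1.symm (d.hne i)
    · exact absurd h.1 (d.hne i)
  · exfalso
    have hd := d.hdisj i j hij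
    cases bi <;> cases bj <;> simp [pfun, Prod.ext_iff] at h
    · exact hd.2.2.2 h.1
    · exact hd.2.2.1 h.1
    · exact hd.2.1 h.1
    · exact hd.1 h.1

lemma mem_P_iff (d : MatchData G M μ) (u v : Fin n) :
    (u, v) ∈ Finset.univ.image (pfun d) ↔ M.Adj u v := by
  constructor
  · intro h
    obtain ⟨⟨i, b⟩, -, hq⟩ := Finset.mem_image.mp h
    cases b <;> simp [pfun, Prod.ext_iff] at hq
    · rw [← hq.1, ← hq.2]
      exact (d.hadj i).symm
    · rw [← hq.1, ← hq.2]
      exact d.hadj i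
  · intro h
    obtain ⟨i, ⟨h1, h2⟩ | ⟨h1, h2⟩⟩ := d.hedge u v h
    · exact Finset.mem_image.mpr ⟨(i, true), Finset.mem_univ _, by simp [pfun, h1, h2]⟩
    · exact Finset.mem_image.mpr ⟨(i, false), Finset.mem_univ _, by simp [pfun, h1, h2]⟩

/-- The edgewise energy function. -/
noncomputable def eF (G : SimpleGraph (Fin n)) (α : Fin n → Fin n → ℝ) (x : Fin n → ℂ)
    (q : Fin n × Fin n) : ℝ :=
  if G.Adj q.1 q.2 then Complex.normSq (x q.1 - mphase α q.1 q.2 * x q.2) else 0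

lemma eF_nonneg (x : Fin n → ℂ) (q : Fin n × Fin n) : 0 ≤ eF G α x q := by
  unfold eF; split_ifs
  · exact Complex.normSq_nonneg _
  · exact le_refl 0

lemma quad_split (d : MatchData G M μ) (x : Fin n → ℂ) :
    (∑ u, ∑ v, if G.Adj u v then Complex.normSq (x u - mphase α u v * x v) else 0) =
      (∑ q : Fin μ × Bool, eF G α x (pfun d q)) +
        ∑ q ∈ Finset.univ.filter (fun q => q ∉ Finset.univ.image (pfun d)), eF G α x q := by
  have h1 : (∑ u, ∑ v, if G.Adj u v then Complex.normSq (x u - mphase α u v * x v) else 0) =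
      ∑ q : Fin n × Fin n, eF G α x q := by
    rw [← Finset.univ_product_univ, Finset.sum_product]
    rfl
  rw [h1, ← Finset.sum_filter_add_sum_filter_not Finset.univ
    (fun q => q ∈ Finset.univ.image (pfun d)) (eF G α x)]
  congr 1
  have h2 : Finset.univ.filter (fun q => q ∈ Finset.univ.image (pfun d)) =
      Finset.univ.image (pfun d) := by
    ext q; simp
  rw [h2, Finset.sum_image (fun a _ b _ h => pfun_inj d h)]

end Sides

section SideB
variable {n μ : ℕ} {G : SimpleGraph (Fin n)} {α : Fin n → Fin n → ℝ} {M : G.Subgraph}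

open scoped Classical

noncomputable def wvec (d : MatchData G M μ) (α : Fin n → Fin n → ℝ) (i : Fin μ) :
    Fin n → ℂ := fun a =>
  if a = d.uu i then 1
  else if a = d.vv i then -(starRingEnd ℂ) (mphase α (d.uu i) (d.vv i)) else 0

lemma wvec_val (d : MatchData G M μ) (c : Fin μ → ℂ) :
    (∀ i, (∑ j, c j • wvec d α j) (d.uu i) = c i) ∧
    (∀ i, (∑ j, c j • wvec d α j) (d.vv i) =
      -(c i * (starRingEnd ℂ) (mphase α (d.uu i) (d.vv i)))) ∧
    (∀ a, a ∉ M.verts → (∑ j, c j • wvec d α j) a = 0) := by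
  have happ : ∀ a, (∑ j, c j • wvec d α j) a = ∑ j, c j * wvec d α j a := by
    intro a
    simp [Finset.sum_apply]
  refine ⟨fun i => ?_, fun i => ?_, fun a ha => ?_⟩
  · rw [happ]
    rw [Finset.sum_eq_single i]
    · simp [wvec]
    · intro j _ hji
      have hd := d.hdisj i j (Ne.symm hji)
      have h1 : d.uu i ≠ d.uu j := hd.1
      have h2 : d.uu i ≠ d.vv j := hd.2.1
      simp [wvec, h1, h2]
    · intro h
      exact absurd (Finset.mem_univ i) h
  · rw [happ]
    rw [Finset.sum_eq_single i]
    · have := (d.hne i).symm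
      simp [wvec, this]
      try ring
    · intro j _ hji
      have hd := d.hdisj i j (Ne.symm hji)
      have h1 : d.vv i ≠ d.uu j := hd.2.2.1
      have h2 : d.vv i ≠ d.vv j := hd.2.2.2
      simp [wvec, h1, h2]
    · intro h
      exact absurd (Finset.mem_univ i) h
  · rw [happ]
    refine Finset.sum_eq_zero fun j _ => ?_
    have h1 : a ≠ d.uu j := fun h => ha ((d.hvert a).mpr ⟨j, Or.inl h⟩)
    have h2 : a ≠ d.vv j := fun h => ha ((d.hvert a).mpr ⟨j, Or.inr h⟩)
    simp [wvec, h1, h2]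

lemma wvec_indep (d : MatchData G M μ) :
    LinearIndependent ℂ (wvec d α) := by
  rw [Fintype.linearIndependent_iff]
  intro c hc i
  have := (wvec_val d c (α := α)).1 i
  rw [hc] at this
  simpa using this.symm

/-- norm computation for an element of the span -/
lemma sideB_norm (d : MatchData G M μ) (c : Fin μ → ℂ) :
    (∑ a, Complex.normSq ((∑ j, c j • wvec d α j) a)) =
      2 * ∑ i, Complex.normSq (c i) := by
  set x : Fin n → ℂ := ∑ j, c j • wvec d α j with hx
  obtain ⟨h1, h2, h3⟩ := wvec_val d c (α := α)
  rw [← hx] at h1 h2 h3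
  have himg : ∑ a, Complex.normSq (x a) =
      ∑ a ∈ Finset.univ.image (pv d), Complex.normSq (x a) := by
    symm
    refine Finset.sum_subset (Finset.subset_univ _) ?_
    intro a _ ha
    have hav : a ∉ M.verts := by
      intro hv
      obtain ⟨i, hi | hi⟩ := (d.hvert a).mp hv
      · exact ha (Finset.mem_image.mpr ⟨(i, true), Finset.mem_univ _, by simp [pv, hi]⟩)
      · exact ha (Finset.mem_image.mpr ⟨(i, false), Finset.mem_univ _, by simp [pv, hi]⟩)
    rw [h3 a hav]
    simp
  rw [himg, Finset.sum_image (fun a _ b _ h => pv_inj d h)]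
  rw [Fintype.sum_prod_type]
  have : ∀ i : Fin μ, ∑ b : Bool, Complex.normSq (x (pv d (i, b))) =
      2 * Complex.normSq (c i) := by
    intro i
    rw [Fintype.sum_bool]
    have ht : pv d (i, true) = d.uu i := rfl
    have hf : pv d (i, false) = d.vv i := rfl
    rw [ht, hf, h1 i, h2 i]
    simp only [Complex.normSq_neg, _root_.map_mul, Complex.normSq_conj, normSq_mphase]
    ring
  rw [Finset.sum_congr rfl fun i _ => this i, ← Finset.mul_sum]

end SideB


section SideBMain
variable {n μ : ℕ} {G : SimpleGraph (Fin n)} {α : Fin n → Fin n → ℝ} {M : G.Subgraph}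

open scoped Classical

lemma normSq_two_mul (z : ℂ) : Complex.normSq (2 * z) = 4 * Complex.normSq z := by
  rw [_root_.map_mul]
  have : Complex.normSq 2 = 4 := by
    simp [Complex.normSq_apply]
    norm_num
  rw [this]

lemma sideB_energy (hα : ∀ u v, α v u = -α u v) (d : MatchData G M μ) (c : Fin μ → ℂ)
    (i : Fin μ) :
    eF G α (∑ j, c j • wvec d α j) (pfun d (i, true)) = 4 * Complex.normSq (c i) ∧
    eF G α (∑ j, c j • wvec d α j) (pfun d (i, false)) = 4 * Complex.normSq (c i) := by
  obtain ⟨h1, h2, h3⟩ := wvec_val d c (α := α)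
  have hadjG : G.Adj (d.uu i) (d.vv i) := (d.hadj i).adj_sub
  constructor
  · have hp : pfun d (i, true) = (d.uu i, d.vv i) := rfl
    rw [hp, eF]
    simp only [if_pos hadjG]
    have hval : (∑ j, c j • wvec d α j) (d.uu i) -
        mphase α (d.uu i) (d.vv i) * (∑ j, c j • wvec d α j) (d.vv i) = 2 * c i := by
      rw [h1 i, h2 i]
      have hm := mul_conj_mphase α (d.uu i) (d.vv i)
      linear_combination c i * hm
    rw [hval, normSq_two_mul]
  · have hp : pfun d (i, false) = (d.vv i, d.uu i) := rfl
    rw [hp, eF]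
    simp only [if_pos hadjG.symm]
    have hph : mphase α (d.vv i) (d.uu i) = (starRingEnd ℂ) (mphase α (d.uu i) (d.vv i)) :=
      (conj_mphase hα (d.uu i) (d.vv i)).symm
    have hval : (∑ j, c j • wvec d α j) (d.vv i) -
        mphase α (d.vv i) (d.uu i) * (∑ j, c j • wvec d α j) (d.uu i) =
        2 * (-(c i * (starRingEnd ℂ) (mphase α (d.uu i) (d.vv i)))) := by
      rw [h1 i, h2 i, hph]
      ring
    rw [hval, normSq_two_mul]
    simp only [Complex.normSq_neg, _root_.map_mul, Complex.normSq_conj, normSq_mphase]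
    ring

lemma sideB (hG : G.Connected) (hα : ∀ u v, α v u = -α u v) (d : MatchData G M μ)
    (w0 : Fin n) (hw0 : w0 ∉ M.verts) :
    ∃ W : Submodule ℂ (Fin n → ℂ), Module.finrank ℂ W = μ ∧
      ∀ x ∈ W, x ≠ 0 →
        4 * (∑ a, Complex.normSq (x a)) <
          ∑ u, ∑ v, if G.Adj u v then Complex.normSq (x u - mphase α u v * x v) else 0 := by
  refine ⟨Submodule.span ℂ (Set.range (wvec d α)), ?_, ?_⟩
  · rw [finrank_span_eq_card (wvec_indep d)]
    simp
  · intro x hx hx0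
    obtain ⟨c, hc⟩ := (Submodule.mem_span_range_iff_exists_fun ℂ).mp hx
    obtain ⟨h1, h2, h3⟩ := wvec_val d c (α := α)
    rw [hc] at h1 h2 h3
    have hN : (∑ a, Complex.normSq (x a)) = 2 * ∑ i, Complex.normSq (c i) := by
      rw [← hc]
      exact sideB_norm d c
    have hsplit := quad_split (α := α) d x
    have hT : (∑ q : Fin μ × Bool, eF G α x (pfun d q)) =
        8 * ∑ i, Complex.normSq (c i) := by
      rw [Fintype.sum_prod_type]
      have : ∀ i : Fin μ, ∑ b : Bool, eF G α x (pfun d (i, b)) =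
          8 * Complex.normSq (c i) := by
        intro i
        rw [Fintype.sum_bool]
        have hE := sideB_energy hα d c i
        rw [hc] at hE
        rw [hE.1, hE.2]
        ring
      rw [Finset.sum_congr rfl fun i _ => this i, ← Finset.mul_sum]
    set R : ℝ := ∑ q ∈ Finset.univ.filter (fun q => q ∉ Finset.univ.image (pfun d)),
      eF G α x q with hR
    have hRnn : 0 ≤ R := Finset.sum_nonneg fun q _ => eF_nonneg x q
    rw [hsplit, hT, hN]
    by_contra hcon
    push_neg at hcon
    have hR0 : R = 0 := le_antisymm (by linarith) hRnn
    have hzero : ∀ q ∈ Finset.univ.filter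
        (fun q => q ∉ Finset.univ.image (pfun d)), eF G α x q = 0 := by
      rw [← Finset.sum_eq_zero_iff_of_nonneg (fun q _ => eF_nonneg x q)]
      exact hR0
    have heq : ∀ u v, G.Adj u v → Complex.normSq (x u) = Complex.normSq (x v) := by
      intro u v huv
      by_cases hP : (u, v) ∈ Finset.univ.image (pfun d)
      · obtain ⟨⟨i, b⟩, -, hq⟩ := Finset.mem_image.mp hP
        cases b
        · have hq' : (d.vv i, d.uu i) = (u, v) := hq
          obtain ⟨e1, e2⟩ := Prod.ext_iff.mp hq'
          simp only at e1 e2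
          rw [← e1, ← e2, h1 i, h2 i]
          simp [Complex.normSq_neg, _root_.map_mul, Complex.normSq_conj, normSq_mphase]
        · have hq' : (d.uu i, d.vv i) = (u, v) := hq
          obtain ⟨e1, e2⟩ := Prod.ext_iff.mp hq'
          simp only at e1 e2
          rw [← e1, ← e2, h1 i, h2 i]
          simp [Complex.normSq_neg, _root_.map_mul, Complex.normSq_conj, normSq_mphase]
      · have := hzero (u, v)
          (by simp only [Finset.mem_filter, Finset.mem_univ, true_and]; exact hP)
        rw [eF] at this
        simp only [if_pos huv] at this
        have hxy : x u = mphase α u v * x v :=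
          sub_eq_zero.mp (Complex.normSq_eq_zero.mp this)
        rw [hxy, _root_.map_mul, normSq_mphase, one_mul]
    have hall : ∀ a, Complex.normSq (x a) = 0 := by
      intro a
      have := const_of_adj hG (fun a => Complex.normSq (x a)) heq a w0
      rw [this, h3 w0 hw0]
      simp
    apply hx0
    funext a
    exact Complex.normSq_eq_zero.mp (hall a)

end SideBMain

section SideAMain
variable {n μ : ℕ} {G : SimpleGraph (Fin n)} {α : Fin n → Fin n → ℝ} {M : G.Subgraph}

open scoped Classical

lemma sideA (hG : G.Connected) (hα : ∀ u v, α v u = -α u v) (d : MatchData G M μ)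
    (w0 : Fin n) (hw0 : w0 ∉ M.verts) :
    ∃ W : Submodule ℂ (Fin n → ℂ),
      n ≤ Module.finrank ℂ W + (G.edgeSet \ M.edgeSet).ncard ∧
      ∀ x ∈ W, x ≠ 0 →
        (∑ u, ∑ v, if G.Adj u v then Complex.normSq (x u - mphase α u v * x v) else 0) <
          4 * (∑ a, Complex.normSq (x a)) := by
  classical
  set D : Finset (Fin n × Fin n) :=
    Finset.univ.filter (fun q => G.Adj q.1 q.2 ∧ ¬ M.Adj q.1 q.2 ∧ q.1 < q.2) with hD
  let Φ : (Fin n → ℂ) →ₗ[ℂ] ({q // q ∈ D} → ℂ) :=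
  { toFun := fun x q =>
      x (q : Fin n × Fin n).1 - mphase α (q : Fin n × Fin n).1 (q : Fin n × Fin n).2 *
        x (q : Fin n × Fin n).2
    map_add' := by
      intro x y
      funext q
      simp only [Pi.add_apply]
      ring
    map_smul' := by
      intro c x
      funext q
      simp only [Pi.smul_apply, smul_eq_mul, RingHom.id_apply]
      ring }
  refine ⟨LinearMap.ker Φ, ?_, ?_⟩
  · -- dimension bound
    have hrank := LinearMap.finrank_range_add_finrank_ker Φ
    have hn : Module.finrank ℂ (Fin n → ℂ) = n := by
      rw [Module.finrank_pi]; simp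
    have hrle : Module.finrank ℂ (LinearMap.range Φ) ≤ D.card := by
      have := Submodule.finrank_le (LinearMap.range Φ)
      rwa [Module.finrank_pi, Fintype.card_coe] at this
    have hfin : (G.edgeSet \ M.edgeSet).Finite := Set.toFinite _
    have hDle : D.card ≤ (G.edgeSet \ M.edgeSet).ncard := by
      rw [Set.ncard_eq_toFinset_card _ hfin]
      refine Finset.card_le_card_of_injOn (fun q => s(q.1, q.2)) ?_ ?_
      · intro q hq
        rw [hD, Finset.mem_coe, Finset.mem_filter] at hq
        rw [Finset.mem_coe, Set.Finite.mem_toFinset]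
        exact ⟨(G.mem_edgeSet).mpr hq.2.1,
          fun h => hq.2.2.1 (SimpleGraph.Subgraph.mem_edgeSet.mp h)⟩
      · intro q1 hq1 q2 hq2 h
        simp only [Finset.mem_coe, hD, Finset.mem_filter] at hq1 hq2
        rcases Sym2.eq_iff.mp h with ⟨e1, e2⟩ | ⟨e1, e2⟩
        · exact Prod.ext e1 e2
        · exfalso
          have := hq1.2.2.2
          have := hq2.2.2.2
          rw [← e1, ← e2] at this
          exact absurd (lt_trans hq1.2.2.2 this) (lt_irrefl _)
    omega
  · -- the quadratic form bound
    intro x hx hx0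
    have hker : Φ x = 0 := LinearMap.mem_ker.mp hx
    have hrel : ∀ u v, G.Adj u v → ¬ M.Adj u v → x u = mphase α u v * x v := by
      intro u v ha hm
      rcases lt_or_gt_of_ne (G.ne_of_adj ha) with hlt | hgt
      · have hq : ((u, v) : Fin n × Fin n) ∈ D := by
          rw [hD, Finset.mem_filter]
          exact ⟨Finset.mem_univ _, ha, hm, hlt⟩
        have := congrFun hker ⟨(u, v), hq⟩
        simp only [Pi.zero_apply] at this
        exact sub_eq_zero.mp this
      · have hq : ((v, u) : Fin n × Fin n) ∈ D := by
          rw [hD, Finset.mem_filter]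
          exact ⟨Finset.mem_univ _, ha.symm, fun h => hm h.symm, hgt⟩
        have h2 := congrFun hker ⟨(v, u), hq⟩
        simp only [Pi.zero_apply] at h2
        have h3 : x v = mphase α v u * x u := sub_eq_zero.mp h2
        rw [h3, ← mul_assoc, mphase_mul_mphase hα, one_mul]
    have hsplit := quad_split (α := α) d x
    -- the residual sum vanishes
    have hR0 : ∑ q ∈ Finset.univ.filter (fun q => q ∉ Finset.univ.image (pfun d)),
        eF G α x q = 0 := by
      refine Finset.sum_eq_zero fun q hq => ?_
      rw [Finset.mem_filter] at hq
      rw [eF]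
      split_ifs with hadj
      · have hnM : ¬ M.Adj q.1 q.2 := by
          intro hM'
          exact hq.2 (by rw [← Prod.mk.eta (p := q)]; exact (mem_P_iff d q.1 q.2).mpr hM')
        rw [hrel q.1 q.2 hadj hnM]
        simp
      · rfl
    set B : Fin μ → ℝ := fun i =>
      2 * Complex.normSq (x (d.uu i)) + 2 * Complex.normSq (x (d.vv i)) with hB
    have hterm : ∀ q : Fin μ × Bool, eF G α x (pfun d q) ≤ B q.1 := by
      rintro ⟨i, b⟩
      have hadjG : G.Adj (d.uu i) (d.vv i) := (d.hadj i).adj_sub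
      cases b
      · have hp : pfun d (i, false) = (d.vv i, d.uu i) := rfl
        rw [hp, eF]
        simp only [if_pos hadjG.symm]
        calc Complex.normSq (x (d.vv i) - mphase α (d.vv i) (d.uu i) * x (d.uu i)) ≤
              2 * Complex.normSq (x (d.vv i)) +
                2 * Complex.normSq (mphase α (d.vv i) (d.uu i) * x (d.uu i)) :=
            normSq_sub_le _ _
          _ = B i := by
            rw [_root_.map_mul, normSq_mphase, one_mul, hB]
            ring
      · have hp : pfun d (i, true) = (d.uu i, d.vv i) := rfl
        rw [hp, eF]
        simp only [if_pos hadjG]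
        calc Complex.normSq (x (d.uu i) - mphase α (d.uu i) (d.vv i) * x (d.vv i)) ≤
              2 * Complex.normSq (x (d.uu i)) +
                2 * Complex.normSq (mphase α (d.uu i) (d.vv i) * x (d.vv i)) :=
            normSq_sub_le _ _
          _ = B i := by
            rw [_root_.map_mul, normSq_mphase, one_mul, hB]
    set Nm : ℝ := ∑ i, (Complex.normSq (x (d.uu i)) + Complex.normSq (x (d.vv i))) with hNm
    have hBsum : ∑ q : Fin μ × Bool, B q.1 = 4 * Nm := by
      rw [Fintype.sum_prod_type, hNm, Finset.mul_sum]
      refine Finset.sum_congr rfl fun i _ => ?_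
      rw [Fintype.sum_bool, hB]
      ring
    have hTle : ∑ q : Fin μ × Bool, eF G α x (pfun d q) ≤ 4 * Nm := by
      rw [← hBsum]
      exact Finset.sum_le_sum fun q _ => hterm q
    -- decompose the total norm
    have himgsub : Finset.univ.image (pv d) ⊆ Finset.univ := Finset.subset_univ _
    have hNmimg : ∑ a ∈ Finset.univ.image (pv d), Complex.normSq (x a) = Nm := by
      rw [Finset.sum_image (fun a _ b _ h => pv_inj d h), Fintype.sum_prod_type, hNm]
      refine Finset.sum_congr rfl fun i _ => ?_
      rw [Fintype.sum_bool]
      have ht : pv d (i, true) = d.uu i := rfl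
      have hf : pv d (i, false) = d.vv i := rfl
      rw [ht, hf]
    have hNsplit : ∑ a ∈ Finset.univ \ Finset.univ.image (pv d), Complex.normSq (x a) + Nm =
        ∑ a, Complex.normSq (x a) := by
      rw [← hNmimg]
      exact Finset.sum_sdiff himgsub
    set Nrest : ℝ := ∑ a ∈ Finset.univ \ Finset.univ.image (pv d), Complex.normSq (x a)
      with hNrest
    have hNrnn : 0 ≤ Nrest := Finset.sum_nonneg fun a _ => Complex.normSq_nonneg _
    rw [hsplit, hR0, add_zero, ← hNsplit]
    by_contra hcon
    push_neg at hcon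
    -- equality cases
    have hNrest0 : Nrest = 0 := by linarith
    have hTeq : ∑ q : Fin μ × Bool, eF G α x (pfun d q) = ∑ q : Fin μ × Bool, B q.1 := by
      rw [hBsum]
      linarith
    have heqterm := (Finset.sum_eq_sum_iff_of_le (fun q _ => hterm q)).mp hTeq
    have hmatched : ∀ i, x (d.uu i) = -(mphase α (d.uu i) (d.vv i) * x (d.vv i)) := by
      intro i
      have := heqterm (i, true) (Finset.mem_univ _)
      have hp : pfun d (i, true) = (d.uu i, d.vv i) := rfl
      rw [hp, eF] at this
      have hadjG : G.Adj (d.uu i) (d.vv i) := (d.hadj i).adj_sub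
      simp only [if_pos hadjG] at this
      refine eq_neg_of_normSq_sub _ _ ?_
      rw [this, hB, _root_.map_mul, normSq_mphase, one_mul]
    have hrest0 : ∀ a, a ∉ Finset.univ.image (pv d) → Complex.normSq (x a) = 0 := by
      intro a ha
      have hmem : a ∈ Finset.univ \ Finset.univ.image (pv d) := by
        rw [Finset.mem_sdiff]
        exact ⟨Finset.mem_univ _, ha⟩
      exact (Finset.sum_eq_zero_iff_of_nonneg
        (fun b _ => Complex.normSq_nonneg (x b))).mp hNrest0 a hmem
    have hw0img : w0 ∉ Finset.univ.image (pv d) := by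
      intro hmem
      obtain ⟨⟨i, b⟩, -, hq⟩ := Finset.mem_image.mp hmem
      apply hw0
      cases b
      · exact (d.hvert w0).mpr ⟨i, Or.inr (by rw [← hq]; rfl)⟩
      · exact (d.hvert w0).mpr ⟨i, Or.inl (by rw [← hq]; rfl)⟩
    have heq : ∀ u v, G.Adj u v → Complex.normSq (x u) = Complex.normSq (x v) := by
      intro u v huv
      by_cases hM' : M.Adj u v
      · obtain ⟨⟨i, b⟩, -, hq⟩ := Finset.mem_image.mp ((mem_P_iff d u v).mpr hM')
        cases b
        · have hq' : (d.vv i, d.uu i) = (u, v) := hq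
          obtain ⟨e1, e2⟩ := Prod.ext_iff.mp hq'
          simp only at e1 e2
          rw [← e1, ← e2, hmatched i]
          simp [Complex.normSq_neg, _root_.map_mul, normSq_mphase]
        · have hq' : (d.uu i, d.vv i) = (u, v) := hq
          obtain ⟨e1, e2⟩ := Prod.ext_iff.mp hq'
          simp only at e1 e2
          rw [← e1, ← e2, hmatched i]
          simp [Complex.normSq_neg, _root_.map_mul, normSq_mphase]
      · rw [hrel u v huv hM', _root_.map_mul, normSq_mphase, one_mul]
    have hall : ∀ a, Complex.normSq (x a) = 0 := by
      intro a
      have := const_of_adj hG (fun a => Complex.normSq (x a)) heq a w0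
      rw [this]
      exact hrest0 w0 hw0img
    apply hx0
    funext a
    exact Complex.normSq_eq_zero.mp (hall a)

end SideAMain

/-- For a connected graph `G` on `n` vertices with `m` edges,
matching number `μ(G)` and any magnetic potential `α`, if `n > 2μ(G)` then
`λ_{μ(G)+n-m}(Δ_α^G) < 2 < λ_{n-μ(G)+1}(Δ_α^G)`. -/
theorem connected_matching_strict_bounds {n m : ℕ} (G : SimpleGraph (Fin n))
    (hG : G.Connected) (hm : G.edgeSet.ncard = m)
    (α : Fin n → Fin n → ℝ) (hα : ∀ u v, α v u = -α u v)
    (hμ : 2 * matchingNumber G < n) :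
    lamb (magLap_isHermitian G α hα) (matchingNumber G + n - m) < ((2 : ℝ) : EReal) ∧
    ((2 : ℝ) : EReal) < lamb (magLap_isHermitian G α hα) (n - matchingNumber G + 1) := by
  classical
  have hbdd : BddAbove {k : ℕ | ∃ M : G.Subgraph, M.IsMatching ∧ M.edgeSet.ncard = k} := by
    refine ⟨m, fun k hk => ?_⟩
    obtain ⟨M, hMm, hc⟩ := hk
    rw [← hc, ← hm]
    exact Set.ncard_le_ncard (SimpleGraph.Subgraph.edgeSet_subset M) (Set.toFinite _)
  have h0S : 0 ∈ {k : ℕ | ∃ M : G.Subgraph, M.IsMatching ∧ M.edgeSet.ncard = k} := by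
    refine ⟨⊥, ?_, ?_⟩
    · intro v hv
      simp only [SimpleGraph.Subgraph.verts_bot, Set.mem_empty_iff_false] at hv
    · simp [SimpleGraph.Subgraph.edgeSet_bot]
  have hmem : matchingNumber G ∈
      {k : ℕ | ∃ M : G.Subgraph, M.IsMatching ∧ M.edgeSet.ncard = k} :=
    Nat.sSup_mem ⟨0, h0S⟩ hbdd
  obtain ⟨M, hM, hMcard⟩ := hmem
  set μ := matchingNumber G with hμdef
  obtain ⟨d⟩ := exists_matchData hM hMcard
  obtain ⟨w0, hw0⟩ := exists_unmatched d hμ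
  have hμm : μ ≤ m := by
    have h := Set.ncard_le_ncard (SimpleGraph.Subgraph.edgeSet_subset M) (Set.toFinite _)
    rw [hMcard, hm] at h
    exact h
  have hg : Monotone ((magLap_isHermitian G α hα).eigenvalues ∘
      Tuple.sort (magLap_isHermitian G α hα).eigenvalues) := Tuple.monotone_sort _
  have hre : ∀ x : Fin n → ℂ, 2 * (star x ⬝ᵥ (magLap G α) *ᵥ x).re =
      ∑ u, ∑ v, if G.Adj u v then Complex.normSq (x u - mphase α u v * x v) else 0 := by
    intro x
    have h := congrArg Complex.re (magLap_quad G α hα x)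
    rw [Complex.ofReal_re] at h
    rw [h]
    simp [Complex.mul_re]
  have hnr : ∀ x : Fin n → ℂ, (star x ⬝ᵥ x).re = ∑ a, Complex.normSq (x a) := by
    intro x
    rw [norm_quad x, Complex.ofReal_re]
  constructor
  · -- λ_{μ+n-m} < 2
    by_cases hk0 : μ + n - m = 0
    · rw [hk0]
      simp only [lamb]
      simp
    · obtain ⟨W, hWrank, hWform⟩ := sideA hG hα d w0 hw0
      have hdiff : (G.edgeSet \ M.edgeSet).ncard = m - μ := by
        rw [Set.ncard_diff (SimpleGraph.Subgraph.edgeSet_subset M), hm, hMcard]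
      rw [hdiff] at hWrank
      have hcount := finrank_le_card_lt (magLap_isHermitian G α hα) 2 W
        (fun x hx hx0 => by
          have hq := hWform x hx hx0
          have h2 := hre x
          have h3 := hnr x
          linarith)
      have hcard : μ + n - m ≤ (Finset.univ.filter
          (fun i => (magLap_isHermitian G α hα).eigenvalues i < 2)).card := by omega
      have hcard' : μ + n - m ≤ (Finset.univ.filter
          (fun i => ((magLap_isHermitian G α hα).eigenvalues ∘
            Tuple.sort (magLap_isHermitian G α hα).eigenvalues) i < 2)).card := by
        have hpc := card_filter_comp_perm (Tuple.sort (magLap_isHermitian G α hα).eigenvalues)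
          (fun i => (magLap_isHermitian G α hα).eigenvalues i < 2)
        rw [show (Finset.univ.filter (fun i => ((magLap_isHermitian G α hα).eigenvalues ∘
            Tuple.sort (magLap_isHermitian G α hα).eigenvalues) i < 2)) =
            (Finset.univ.filter (fun i => (magLap_isHermitian G α hα).eigenvalues
              (Tuple.sort (magLap_isHermitian G α hα).eigenvalues i) < 2)) from rfl, hpc]
        exact hcard
      have hlt := sorted_lt_of_card hg (show 1 ≤ μ + n - m by omega)
        (show μ + n - m ≤ n by omega) hcard'
      simp only [lamb]
      rw [dif_pos ⟨by omega, by omega⟩]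
      exact EReal.coe_lt_coe_iff.mpr hlt
  · -- 2 < λ_{n-μ+1}
    by_cases hμ0 : μ = 0
    · simp only [lamb]
      rw [dif_neg (by omega), if_neg (by omega)]
      exact EReal.coe_lt_top 2
    · obtain ⟨W, hWrank, hWform⟩ := sideB hG hα d w0 hw0
      have hcount := finrank_le_card_gt (magLap_isHermitian G α hα) 2 W
        (fun x hx hx0 => by
          have hq := hWform x hx hx0
          have h2 := hre x
          have h3 := hnr x
          linarith)
      rw [hWrank] at hcount
      have hcard' : μ ≤ (Finset.univ.filter
          (fun i => 2 < ((magLap_isHermitian G α hα).eigenvalues ∘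
            Tuple.sort (magLap_isHermitian G α hα).eigenvalues) i)).card := by
        have hpc := card_filter_comp_perm (Tuple.sort (magLap_isHermitian G α hα).eigenvalues)
          (fun i => 2 < (magLap_isHermitian G α hα).eigenvalues i)
        rw [show (Finset.univ.filter (fun i => 2 < ((magLap_isHermitian G α hα).eigenvalues ∘
            Tuple.sort (magLap_isHermitian G α hα).eigenvalues) i)) =
            (Finset.univ.filter (fun i => 2 < (magLap_isHermitian G α hα).eigenvalues
              (Tuple.sort (magLap_isHermitian G α hα).eigenvalues i))) from rfl, hpc]
        exact hcount
      have hgt := sorted_gt_of_card hg (show 1 ≤ μ by omega) (show μ ≤ n by omega) hcard'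
      simp only [lamb]
      rw [dif_pos ⟨by omega, by omega⟩]
      exact EReal.coe_lt_coe_iff.mpr hgt
end

section
/- Let G be a finite simple graph on n vertices with m edges and magnetic potential α. If G contains a Hamiltonian cycle C_n (a cycle visiting every vertex exactly once), and α' denotes the restriction of α to the edges of C_n, then λ_k(Δ_{α'}^{C_n}) ≤ λ_k(Δ_α^G) for all 1 ≤ k ≤ n, and λ_k(Δ_α^G) ≤ λ_{k+m-n}(Δ_{α'}^{C_n}) for all 1 ≤ k ≤ 2n - m. -/
section InterlacingAux
open Matrix Finset Complex


/-- A family of fewer than `n` linear constraints on `ℂ^n` has a nonzero solution. -/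
lemma exists_ne_zero_orth {n : ℕ} {ι : Type} [Fintype ι] (h : Fintype.card ι < n)
    (g : ι → (Fin n → ℂ)) : ∃ x : Fin n → ℂ, x ≠ 0 ∧ ∀ j, g j ⬝ᵥ x = 0 := by
  let f : (Fin n → ℂ) →ₗ[ℂ] (ι → ℂ) :=
    { toFun := fun x => fun j => g j ⬝ᵥ x
      map_add' := by intro a b; ext j; simp [dotProduct_add]
      map_smul' := by intro c a; ext j; simp [dotProduct_smul] }
  have hni : ¬ Function.Injective f := by
    intro hinj
    have h1 := LinearMap.finrank_le_finrank_of_injective hinj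
    simp only [Module.finrank_pi, Fintype.card_fin] at h1
    omega
  rw [Function.not_injective_iff] at hni
  obtain ⟨a, b, hab, hne⟩ := hni
  refine ⟨a - b, sub_ne_zero.2 hne, fun j => ?_⟩
  have : f (a - b) = 0 := by rw [map_sub, hab, sub_self]
  exact congrFun this j


lemma dot_star_self {n : ℕ} (v : Fin n → ℂ) :
    star v ⬝ᵥ v = ((∑ i, Complex.normSq (v i) : ℝ) : ℂ) := by
  simp only [dotProduct, Pi.star_apply, Complex.ofReal_sum]
  refine Finset.sum_congr rfl fun i _ => ?_
  rw [Complex.normSq_eq_conj_mul_self, Complex.star_def]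

section quad
variable {n : ℕ} {A : Matrix (Fin n) (Fin n) ℂ} {w : Fin n → Fin n → ℂ} {μ : Fin n → ℝ}

/-- Expansion of the quadratic form in an orthonormal eigenbasis. -/
lemma quad_expand
    (horth : ∀ i j, star (w i) ⬝ᵥ w j = if i = j then (1:ℂ) else 0)
    (heig : ∀ i, A *ᵥ w i = (μ i : ℂ) • w i) (x : Fin n → ℂ) :
    star x ⬝ᵥ (A *ᵥ x) = ((∑ i, μ i * Complex.normSq (star (w i) ⬝ᵥ x) : ℝ) : ℂ) ∧
    (∑ i, Complex.normSq (star (w i) ⬝ᵥ x)) = ∑ i, Complex.normSq (x i) := by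
  classical
  set W : Matrix (Fin n) (Fin n) ℂ := Matrix.of (fun j i => w i j) with hWdef
  have hWH : ∀ y : Fin n → ℂ, ∀ i, (Wᴴ *ᵥ y) i = star (w i) ⬝ᵥ y := by
    intro y i
    simp [Matrix.mulVec, Matrix.conjTranspose_apply, dotProduct, W, Pi.star_apply]
  have hWHW : Wᴴ * W = 1 := by
    ext i j
    have := horth i j
    simp only [dotProduct, Pi.star_apply] at this
    simp only [Matrix.mul_apply, Matrix.conjTranspose_apply, Matrix.of_apply, W,
      Matrix.one_apply]
    simpa using this
  have hWWH : W * Wᴴ = 1 := mul_eq_one_comm.mp hWHW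
  have hAW : A * W = W * Matrix.diagonal (fun i => (μ i : ℂ)) := by
    ext j i
    have := congrFun (heig i) j
    simp only [Matrix.mulVec, dotProduct, Pi.smul_apply, smul_eq_mul] at this
    rw [Matrix.mul_diagonal]
    simp only [Matrix.mul_apply, Matrix.of_apply, W]
    rw [this, mul_comm]
  have hA : A = W * Matrix.diagonal (fun i => (μ i : ℂ)) * Wᴴ := by
    calc A = A * (W * Wᴴ) := by rw [hWWH, Matrix.mul_one]
    _ = (A * W) * Wᴴ := by rw [Matrix.mul_assoc]
    _ = W * Matrix.diagonal (fun i => (μ i : ℂ)) * Wᴴ := by rw [hAW]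
  set c : Fin n → ℂ := Wᴴ *ᵥ x with hc
  have hcx : ∀ i, c i = star (w i) ⬝ᵥ x := fun i => by rw [hc]; exact hWH x i
  have e1 : star c = star x ᵥ* W := by rw [hc, star_mulVec, conjTranspose_conjTranspose]
  have key2 : (∑ i, Complex.normSq (c i)) = ∑ i, Complex.normSq (x i) := by
    have h1 : star c ⬝ᵥ c = star x ⬝ᵥ x := by
      rw [e1, ← Matrix.dotProduct_mulVec, hc, Matrix.mulVec_mulVec, hWWH, Matrix.one_mulVec]
    have := (dot_star_self c).symm.trans (h1.trans (dot_star_self x))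
    exact_mod_cast this
  constructor
  · have h2 : star x ⬝ᵥ (A *ᵥ x) =
        star c ⬝ᵥ (Matrix.diagonal (fun i => (μ i : ℂ)) *ᵥ c) := by
      rw [hA, ← Matrix.mulVec_mulVec, ← hc, ← Matrix.mulVec_mulVec,
        Matrix.dotProduct_mulVec, ← e1]
    rw [h2]
    simp only [← hcx]
    simp only [dotProduct, Matrix.mulVec_diagonal, Pi.star_apply, Complex.ofReal_sum,
      Complex.ofReal_mul]
    refine Finset.sum_congr rfl fun i _ => ?_
    rw [Complex.normSq_eq_conj_mul_self, Complex.star_def]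
    ring
  · simp only [← hcx]
    exact key2

end quad


noncomputable def sval {n : ℕ} {A : Matrix (Fin n) (Fin n) ℂ} (hA : A.IsHermitian) :
    Fin n → ℝ := hA.eigenvalues ∘ Tuple.sort hA.eigenvalues

lemma sval_mono {n : ℕ} {A : Matrix (Fin n) (Fin n) ℂ} (hA : A.IsHermitian) :
    Monotone (sval hA) := Tuple.monotone_sort hA.eigenvalues

lemma sorted_eigensystem {n : ℕ} {A : Matrix (Fin n) (Fin n) ℂ} (hA : A.IsHermitian) :
    ∃ w : Fin n → (Fin n → ℂ),
      (∀ i j, star (w i) ⬝ᵥ w j = if i = j then (1:ℂ) else 0) ∧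
      (∀ i, A *ᵥ w i = (sval hA i : ℂ) • w i) := by
  refine ⟨fun i => ⇑(hA.eigenvectorBasis (Tuple.sort hA.eigenvalues i)), ?_, ?_⟩
  · intro i j
    have horth := hA.eigenvectorBasis.orthonormal
    rw [orthonormal_iff_ite] at horth
    have := horth (Tuple.sort hA.eigenvalues i) (Tuple.sort hA.eigenvalues j)
    rw [EuclideanSpace.inner_eq_star_dotProduct] at this
    have hinj : (Tuple.sort hA.eigenvalues i = Tuple.sort hA.eigenvalues j) ↔ i = j :=
      ⟨fun h => (Tuple.sort hA.eigenvalues).injective h, fun h => by rw [h]⟩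
    simp only [hinj] at this
    rwa [dotProduct_comm] at this
  · intro i
    have := hA.mulVec_eigenvectorBasis (Tuple.sort hA.eigenvalues i)
    rw [this]
    ext j
    simp [sval, Complex.real_smul]












/-- Rayleigh-type bounds for a vector supported on high (resp. low) sorted eigenvectors. -/
lemma rayleigh_lower {n : ℕ} {A : Matrix (Fin n) (Fin n) ℂ} (hA : A.IsHermitian)
    {w : Fin n → Fin n → ℂ}
    (horth : ∀ i j, star (w i) ⬝ᵥ w j = if i = j then (1:ℂ) else 0)
    (heig : ∀ i, A *ᵥ w i = (sval hA i : ℂ) • w i)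
    (x : Fin n → ℂ) (k : Fin n) (hc : ∀ i, i < k → star (w i) ⬝ᵥ x = 0) :
    sval hA k * (∑ i, Complex.normSq (x i)) ≤ (star x ⬝ᵥ (A *ᵥ x)).re := by
  obtain ⟨hq, hs⟩ := quad_expand horth heig x
  rw [hq, Complex.ofReal_re, ← hs, Finset.mul_sum]
  refine Finset.sum_le_sum fun i _ => ?_
  rcases lt_or_ge i k with h | h
  · rw [hc i h]; simp
  · exact mul_le_mul_of_nonneg_right (sval_mono hA h) (Complex.normSq_nonneg _)

lemma rayleigh_upper {n : ℕ} {A : Matrix (Fin n) (Fin n) ℂ} (hA : A.IsHermitian)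
    {w : Fin n → Fin n → ℂ}
    (horth : ∀ i j, star (w i) ⬝ᵥ w j = if i = j then (1:ℂ) else 0)
    (heig : ∀ i, A *ᵥ w i = (sval hA i : ℂ) • w i)
    (x : Fin n → ℂ) (k : Fin n) (hc : ∀ i, k < i → star (w i) ⬝ᵥ x = 0) :
    (star x ⬝ᵥ (A *ᵥ x)).re ≤ sval hA k * (∑ i, Complex.normSq (x i)) := by
  obtain ⟨hq, hs⟩ := quad_expand horth heig x
  rw [hq, Complex.ofReal_re, ← hs, Finset.mul_sum]
  refine Finset.sum_le_sum fun i _ => ?_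
  rcases lt_or_ge k i with h | h
  · rw [hc i h]; simp
  · exact mul_le_mul_of_nonneg_right (sval_mono hA h) (Complex.normSq_nonneg _)

lemma normSq_sum_pos {n : ℕ} {x : Fin n → ℂ} (hx : x ≠ 0) :
    0 < ∑ i, Complex.normSq (x i) := by
  have : ∃ i, x i ≠ 0 := by
    by_contra h
    push_neg at h
    exact hx (funext h)
  obtain ⟨i, hi⟩ := this
  refine Finset.sum_pos' (fun j _ => Complex.normSq_nonneg _) ⟨i, Finset.mem_univ i, ?_⟩
  exact Complex.normSq_pos.2 hi

/-- Quadratic form of `B = A + ∑ yⱼ yⱼ*`. -/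
lemma quad_sum_outer {n : ℕ} {A B : Matrix (Fin n) (Fin n) ℂ}
    {ι : Type} [Fintype ι] (y : ι → (Fin n → ℂ))
    (hAB : B = A + ∑ j, Matrix.vecMulVec (y j) (star (y j))) (x : Fin n → ℂ) :
    star x ⬝ᵥ (B *ᵥ x) = star x ⬝ᵥ (A *ᵥ x)
      + ((∑ j, Complex.normSq (star (y j) ⬝ᵥ x) : ℝ) : ℂ) := by
  rw [hAB, Matrix.add_mulVec, dotProduct_add]
  congr 1
  have hsum : (∑ j, Matrix.vecMulVec (y j) (star (y j))) *ᵥ x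
      = ∑ j, (Matrix.vecMulVec (y j) (star (y j)) *ᵥ x) := by
    ext i
    simp only [Matrix.mulVec, dotProduct, Matrix.sum_apply, Finset.sum_apply, Finset.sum_mul]
    rw [Finset.sum_comm]
  rw [hsum]
  have hds : star x ⬝ᵥ (∑ j, (Matrix.vecMulVec (y j) (star (y j)) *ᵥ x))
      = ∑ j, star x ⬝ᵥ (Matrix.vecMulVec (y j) (star (y j)) *ᵥ x) := by
    simp only [dotProduct, Finset.sum_apply, Finset.mul_sum]
    rw [Finset.sum_comm]
  rw [hds]
  rw [Complex.ofReal_sum]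
  refine Finset.sum_congr rfl fun j _ => ?_
  have hmv : Matrix.vecMulVec (y j) (star (y j)) *ᵥ x = (star (y j) ⬝ᵥ x) • y j := by
    ext i
    simp only [Matrix.vecMulVec, Matrix.mulVec, dotProduct, Matrix.of_apply, Pi.smul_apply,
      smul_eq_mul]
    rw [Finset.sum_mul]
    exact Finset.sum_congr rfl fun t _ => by ring
  rw [hmv, dotProduct_smul]
  have hconj : star x ⬝ᵥ y j = star (star (y j) ⬝ᵥ x) := by
    rw [star_dotProduct]
  rw [smul_eq_mul, hconj, Complex.star_def, Complex.normSq_eq_conj_mul_self]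
  ring

theorem interlacing_core {n : ℕ} {A B : Matrix (Fin n) (Fin n) ℂ}
    (hA : A.IsHermitian) (hB : B.IsHermitian)
    {ι : Type} [Fintype ι] (y : ι → (Fin n → ℂ))
    (hAB : B = A + ∑ j, Matrix.vecMulVec (y j) (star (y j))) :
    (∀ k : Fin n, sval hA k ≤ sval hB k) ∧
    (∀ k l : Fin n, (k : ℕ) + Fintype.card ι ≤ (l : ℕ) → sval hB k ≤ sval hA l) := by
  obtain ⟨wA, horthA, heigA⟩ := sorted_eigensystem hA
  obtain ⟨wB, horthB, heigB⟩ := sorted_eigensystem hB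
  constructor
  · intro k
    have hcard : Fintype.card {i : Fin n // i ≠ k} < n := by
      rw [Fintype.card_subtype_compl]
      simp only [Fintype.card_subtype_eq, Fintype.card_fin]
      have : 0 < n := k.pos
      omega
    obtain ⟨x, hx0, hx⟩ := exists_ne_zero_orth hcard
      (fun i : {i : Fin n // i ≠ k} => if i.1 < k then star (wA i.1) else star (wB i.1))
    have hxa : ∀ i, i < k → star (wA i) ⬝ᵥ x = 0 := fun i hi => by
      have := hx ⟨i, ne_of_lt hi⟩
      rwa [if_pos hi] at this
    have hxb : ∀ i, k < i → star (wB i) ⬝ᵥ x = 0 := fun i hi => by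
      have := hx ⟨i, ne_of_gt hi⟩
      rwa [if_neg (not_lt_of_gt hi)] at this
    have hS := normSq_sum_pos hx0
    have h1 := rayleigh_lower hA horthA heigA x k hxa
    have h2 := rayleigh_upper hB horthB heigB x k hxb
    have h3 : (star x ⬝ᵥ (A *ᵥ x)).re ≤ (star x ⬝ᵥ (B *ᵥ x)).re := by
      rw [quad_sum_outer y hAB x]
      simp only [Complex.add_re, Complex.ofReal_re]
      have : 0 ≤ ∑ j, Complex.normSq (star (y j) ⬝ᵥ x) :=
        Finset.sum_nonneg fun j _ => Complex.normSq_nonneg _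
      linarith
    have := le_trans h1 (le_trans h3 h2)
    exact le_of_mul_le_mul_right (by linarith) hS
  · intro k l hkl
    have hcard : Fintype.card ({i : Fin n // i < k} ⊕ (ι ⊕ {i : Fin n // l < i})) < n := by
      have c1 : Fintype.card {i : Fin n // i < k} ≤ (k : ℕ) := by
        simpa using Fintype.card_le_of_injective
          (fun i : {i : Fin n // i < k} => (⟨(i.1 : ℕ), i.2⟩ : Fin (k : ℕ)))
          (fun a b hab => by
            simp only [Fin.mk.injEq] at hab
            apply Subtype.ext; apply Fin.ext
            exact hab)
      have c3 : Fintype.card {i : Fin n // l < i} ≤ n - 1 - (l : ℕ) := by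
        have hinj : Function.Injective (fun i : {i : Fin n // l < i} =>
            (⟨(i.1 : ℕ) - (l : ℕ) - 1, by
              have h1 : (l : ℕ) < (i.1 : ℕ) := i.2
              have h2 : (i.1 : ℕ) < n := i.1.isLt
              omega⟩ : Fin (n - 1 - (l : ℕ)))) := by
          intro a b hab
          have h1 : (l : ℕ) < (a.1 : ℕ) := a.2
          have h2 : (l : ℕ) < (b.1 : ℕ) := b.2
          simp only [Fin.mk.injEq] at hab
          apply Subtype.ext; apply Fin.ext
          omega
        simpa using Fintype.card_le_of_injective _ hinj
      have hln : (l : ℕ) < n := l.isLt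
      rw [Fintype.card_sum, Fintype.card_sum]
      omega
    obtain ⟨x, hx0, hx⟩ := exists_ne_zero_orth hcard
      (Sum.elim (fun i : {i : Fin n // i < k} => star (wB i.1))
        (Sum.elim (fun j : ι => star (y j)) (fun i : {i : Fin n // l < i} => star (wA i.1))))
    have hxb : ∀ i, i < k → star (wB i) ⬝ᵥ x = 0 := fun i hi => hx (Sum.inl ⟨i, hi⟩)
    have hy : ∀ j, star (y j) ⬝ᵥ x = 0 := fun j => hx (Sum.inr (Sum.inl j))
    have hxa : ∀ i, l < i → star (wA i) ⬝ᵥ x = 0 := fun i hi => hx (Sum.inr (Sum.inr ⟨i, hi⟩))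
    have hS := normSq_sum_pos hx0
    have h1 := rayleigh_lower hB horthB heigB x k hxb
    have h2 := rayleigh_upper hA horthA heigA x l hxa
    have h3 : (star x ⬝ᵥ (B *ᵥ x)).re = (star x ⬝ᵥ (A *ᵥ x)).re := by
      rw [quad_sum_outer y hAB x]
      have : (∑ j, Complex.normSq (star (y j) ⬝ᵥ x)) = 0 := by
        refine Finset.sum_eq_zero fun j _ => ?_
        rw [hy j]; simp
      rw [this]
      simp
    rw [h3] at h1
    have := le_trans h1 h2
    exact le_of_mul_le_mul_right (by linarith) hS


noncomputable def yvec {n : ℕ} (α : Fin n → Fin n → ℝ) (a b : Fin n) : Fin n → ℂ :=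
  fun w => if w = a then 1 else if w = b then -Complex.exp (α b a * Complex.I) else 0

lemma conj_exp_I (θ : ℝ) :
    (starRingEnd ℂ) (Complex.exp (θ * Complex.I)) = Complex.exp ((-θ : ℝ) * Complex.I) := by
  rw [← Complex.exp_conj]
  congr 1
  rw [_root_.map_mul, Complex.conj_ofReal, Complex.conj_I]
  push_cast
  ring

lemma yvec_diag {n : ℕ} (α : Fin n → Fin n → ℝ) (a b u : Fin n) :
    yvec α a b u * star (yvec α a b u) = if u = a ∨ u = b then 1 else 0 := by
  by_cases h1 : u = a
  · simp [yvec, h1]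
  · by_cases h2 : u = b
    · subst h2
      have e1 : yvec α a u u = -Complex.exp (α u a * Complex.I) := by
        unfold yvec; rw [if_neg h1, if_pos rfl]
      rw [e1, if_pos (Or.inr rfl), Complex.star_def, map_neg, conj_exp_I, neg_mul_neg,
        ← Complex.exp_add]
      have : ((α u a : ℝ) : ℂ) * Complex.I + ((-(α u a) : ℝ) : ℂ) * Complex.I = 0 := by
        push_cast; ring
      rw [this, Complex.exp_zero]
    · simp [yvec, h1, h2]

lemma yvec_term_zero {n : ℕ} (α : Fin n → Fin n → ℝ) {a b u v : Fin n}
    (huv : u ≠ v) (h1 : (a, b) ≠ (u, v)) (h2 : (a, b) ≠ (v, u)) :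
    yvec α a b u * star (yvec α a b v) = 0 := by
  by_cases hua : u = a
  · have hvb : v ≠ b := fun h => h1 (by rw [hua, h])
    have hva : v ≠ a := fun h => huv (hua.trans h.symm)
    simp [yvec, hva, hvb]
  · by_cases hub : u = b
    · have hva : v ≠ a := fun h => h2 (by rw [h, hub])
      have hvb : v ≠ b := fun h => huv (hub.trans h.symm)
      simp [yvec, hva, hvb]
    · simp [yvec, hua, hub]

lemma yvec_term_eq {n : ℕ} (α : Fin n → Fin n → ℝ) (hα : ∀ u v, α v u = -α u v)
    {u v : Fin n} (huv : u ≠ v) :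
    yvec α u v u * star (yvec α u v v) = -Complex.exp (α u v * Complex.I) := by
  unfold yvec
  rw [if_pos rfl, if_neg (Ne.symm huv), if_pos rfl, one_mul, Complex.star_def, map_neg,
    conj_exp_I, hα u v]
  simp

lemma yvec_term_eq' {n : ℕ} (α : Fin n → Fin n → ℝ)
    {u v : Fin n} (huv : u ≠ v) :
    yvec α v u u * star (yvec α v u v) = -Complex.exp (α u v * Complex.I) := by
  unfold yvec
  rw [if_neg huv, if_pos rfl, if_pos rfl]
  simp


lemma degree_split {n : ℕ} (G C : SimpleGraph (Fin n)) (hsub : ∀ {a b : Fin n}, C.Adj a b → G.Adj a b)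
    (D : Finset (Fin n × Fin n))
    (hD : ∀ q : Fin n × Fin n, q ∈ D ↔ q.1 < q.2 ∧ G.Adj q.1 q.2 ∧ ¬ C.Adj q.1 q.2) (u : Fin n) :
    (G.neighborSet u).ncard = (C.neighborSet u).ncard
      + (D.filter (fun q => u = q.1 ∨ u = q.2)).card := by
  classical
  have hNG : (G.neighborSet u).ncard = (Finset.univ.filter (fun w => G.Adj u w)).card := by
    rw [← Set.ncard_coe_finset]
    congr 1
    ext w
    simp [SimpleGraph.mem_neighborSet]
  have hNC : (C.neighborSet u).ncard = (Finset.univ.filter (fun w => C.Adj u w)).card := by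
    rw [← Set.ncard_coe_finset]
    congr 1
    ext w
    simp [SimpleGraph.mem_neighborSet]
  rw [hNG, hNC]
  have hsplit : (Finset.univ.filter (fun w => G.Adj u w))
      = (Finset.univ.filter (fun w => C.Adj u w))
        ∪ (Finset.univ.filter (fun w => G.Adj u w ∧ ¬ C.Adj u w)) := by
    ext w
    simp only [Finset.mem_filter, Finset.mem_univ, true_and, Finset.mem_union]
    constructor
    · intro hg
      by_cases hc : C.Adj u w
      · exact Or.inl hc
      · exact Or.inr ⟨hg, hc⟩
    · rintro (hc | ⟨hg, _⟩)
      · exact hsub hc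
      · exact hg
  have hdis : Disjoint (Finset.univ.filter (fun w => C.Adj u w))
      (Finset.univ.filter (fun w => G.Adj u w ∧ ¬ C.Adj u w)) := by
    rw [Finset.disjoint_left]
    intro w hw1 hw2
    simp only [Finset.mem_filter, Finset.mem_univ, true_and] at hw1 hw2
    exact hw2.2 hw1
  rw [hsplit, Finset.card_union_of_disjoint hdis]
  congr 1
  refine Finset.card_bij' (fun w _ => if u < w then (u, w) else (w, u))
    (fun q _ => if u = q.1 then q.2 else q.1) ?_ ?_ ?_ ?_
  · intro w hw
    beta_reduce
    simp only [Finset.mem_filter, Finset.mem_univ, true_and] at hw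
    obtain ⟨hg, hc⟩ := hw
    have hne : u ≠ w := hg.ne
    by_cases h : u < w
    · rw [if_pos h]
      simp only [Finset.mem_filter, hD]
      exact ⟨⟨h, hg, hc⟩, Or.inl trivial⟩
    · have h' : w < u := lt_of_le_of_ne (not_lt.mp h) (fun e => hne e.symm)
      rw [if_neg h]
      simp only [Finset.mem_filter, hD]
      exact ⟨⟨h', hg.symm, fun hc' => hc hc'.symm⟩, Or.inr trivial⟩
  · intro q hq
    beta_reduce
    simp only [Finset.mem_filter, hD] at hq
    obtain ⟨⟨hlt, hg, hc⟩, hu⟩ := hq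
    simp only [Finset.mem_filter, Finset.mem_univ, true_and]
    by_cases h : u = q.1
    · rw [if_pos h, h]
      exact ⟨hg, hc⟩
    · have h2 : u = q.2 := hu.resolve_left h
      rw [if_neg h, h2]
      exact ⟨hg.symm, fun hc' => hc hc'.symm⟩
  · intro w hw
    beta_reduce
    simp only [Finset.mem_filter, Finset.mem_univ, true_and] at hw
    have hne : u ≠ w := hw.1.ne
    by_cases h : u < w
    · rw [if_pos h]
      simp
    · rw [if_neg h]
      simp [hne]
  · intro q hq
    beta_reduce
    simp only [Finset.mem_filter, hD] at hq
    obtain ⟨⟨hlt, hg, hc⟩, hu⟩ := hq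
    by_cases h : u = q.1
    · rw [if_pos h]
      have hlt2 : u < q.2 := h ▸ hlt
      rw [if_pos hlt2]
      exact Prod.ext h rfl
    · have h2 : u = q.2 := hu.resolve_left h
      rw [if_neg h]
      have hnlt : ¬ u < q.1 := by rw [← h2] at hlt; exact not_lt.2 (le_of_lt hlt)
      rw [if_neg hnlt]
      exact Prod.ext rfl h2

lemma magLap_decomp {n : ℕ} (G C : SimpleGraph (Fin n))
    (hsub : ∀ {a b : Fin n}, C.Adj a b → G.Adj a b)
    (α : Fin n → Fin n → ℝ) (hα : ∀ u v, α v u = -α u v)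
    (D : Finset (Fin n × Fin n))
    (hD : ∀ q : Fin n × Fin n, q ∈ D ↔ q.1 < q.2 ∧ G.Adj q.1 q.2 ∧ ¬ C.Adj q.1 q.2) :
    magLap G α = magLap C α +
      ∑ q ∈ D, Matrix.vecMulVec (yvec α q.1 q.2) (star (yvec α q.1 q.2)) := by
  classical
  ext u w
  simp only [Matrix.add_apply, Matrix.sum_apply, magLap, Matrix.of_apply,
    Matrix.vecMulVec_apply, Pi.star_apply]
  by_cases huw : u = w
  · subst huw
    rw [if_pos rfl, if_pos rfl]
    have hsum : ∑ q ∈ D, yvec α q.1 q.2 u * star (yvec α q.1 q.2 u)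
        = ∑ q ∈ D, (if u = q.1 ∨ u = q.2 then (1 : ℂ) else 0) :=
      Finset.sum_congr rfl fun q _ => yvec_diag α q.1 q.2 u
    rw [hsum, Finset.sum_boole, degree_split G C hsub D hD u]
    push_cast
    ring
  · rw [if_neg huw, if_neg huw]
    have hne : ∀ q ∈ D, q ≠ (u, w) → q ≠ (w, u) →
        yvec α q.1 q.2 u * star (yvec α q.1 q.2 w) = 0 := by
      intro q hq h1 h2
      exact yvec_term_zero α huw (fun h => h1 (by rw [← h])) (fun h => h2 (by rw [← h]))
    by_cases hC : C.Adj u w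
    · rw [if_pos hC, if_pos (hsub hC)]
      have hz : ∑ q ∈ D, yvec α q.1 q.2 u * star (yvec α q.1 q.2 w) = 0 := by
        refine Finset.sum_eq_zero fun q hq => ?_
        refine hne q hq (fun h => ?_) (fun h => ?_)
        · rw [hD] at hq; rw [h] at hq; exact hq.2.2 hC
        · rw [hD] at hq; rw [h] at hq; exact hq.2.2 hC.symm
      rw [hz, add_zero]
    · rw [if_neg hC]
      by_cases hG : G.Adj u w
      · rw [if_pos hG, zero_add]
        rcases lt_or_gt_of_ne huw with hlt | hgt
        · have hmem : (u, w) ∈ D := (hD (u, w)).2 ⟨hlt, hG, hC⟩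
          have hz : ∀ q ∈ D, q ≠ (u, w) →
              yvec α q.1 q.2 u * star (yvec α q.1 q.2 w) = 0 := by
            intro q hq hq'
            refine hne q hq hq' (fun h => ?_)
            rw [hD] at hq
            rw [h] at hq
            exact absurd hq.1 (not_lt.2 (le_of_lt hlt))
          rw [Finset.sum_eq_single_of_mem (u, w) hmem hz]
          exact (yvec_term_eq α hα huw).symm
        · have hmem : (w, u) ∈ D := (hD (w, u)).2 ⟨hgt, hG.symm, fun h => hC h.symm⟩
          have hz : ∀ q ∈ D, q ≠ (w, u) →
              yvec α q.1 q.2 u * star (yvec α q.1 q.2 w) = 0 := by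
            intro q hq hq'
            refine hne q hq (fun h => ?_) hq'
            rw [hD] at hq
            rw [h] at hq
            exact absurd hq.1 (not_lt.2 (le_of_lt hgt))
          rw [Finset.sum_eq_single_of_mem (w, u) hmem hz]
          exact (yvec_term_eq' α huw).symm
      · rw [if_neg hG, zero_add]
        refine (Finset.sum_eq_zero fun q hq => ?_).symm
        refine hne q hq (fun h => ?_) (fun h => ?_)
        · rw [hD] at hq; rw [h] at hq; exact hG hq.2.1
        · rw [hD] at hq; rw [h] at hq; exact hG hq.2.1.symm

lemma D_card_eq {n : ℕ} (G C : SimpleGraph (Fin n))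
    (D : Finset (Fin n × Fin n))
    (hD : ∀ q : Fin n × Fin n, q ∈ D ↔ q.1 < q.2 ∧ G.Adj q.1 q.2 ∧ ¬ C.Adj q.1 q.2) :
    D.card = (G.edgeSet \ C.edgeSet).ncard := by
  classical
  have hinj : Set.InjOn (fun q : Fin n × Fin n => s(q.1, q.2)) ↑D := by
    intro q hq q' hq' he
    simp only [Finset.mem_coe, hD] at hq hq'
    rw [Sym2.eq_iff] at he
    rcases he with ⟨h1, h2⟩ | ⟨h1, h2⟩
    · exact Prod.ext h1 h2
    · exfalso
      rw [← h1, ← h2] at hq'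
      exact absurd hq.1 (not_lt.2 (le_of_lt hq'.1))
  have himg : ↑(D.image (fun q : Fin n × Fin n => s(q.1, q.2))) = G.edgeSet \ C.edgeSet := by
    ext e
    induction e using Sym2.ind with
    | _ a b =>
      simp only [Finset.coe_image, Set.mem_image, Finset.mem_coe, Set.mem_diff]
      constructor
      · rintro ⟨q, hq, hqe⟩
        rw [hD] at hq
        obtain ⟨hlt, hg, hc⟩ := hq
        rw [← hqe]
        exact ⟨(SimpleGraph.mem_edgeSet G).2 hg, fun hce => hc ((SimpleGraph.mem_edgeSet C).1 hce)⟩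
      · rintro ⟨hg, hc⟩
        rw [SimpleGraph.mem_edgeSet G] at hg
        have hab : a ≠ b := hg.ne
        rcases lt_or_gt_of_ne hab with hlt | hgt
        · exact ⟨(a, b), (hD (a, b)).2 ⟨hlt, hg, fun hca =>
            hc ((SimpleGraph.mem_edgeSet C).2 hca)⟩, rfl⟩
        · refine ⟨(b, a), (hD (b, a)).2 ⟨hgt, hg.symm, fun hca =>
            hc ((SimpleGraph.mem_edgeSet C).2 hca.symm)⟩, ?_⟩
          exact Sym2.eq_swap
  rw [← Finset.card_image_of_injOn hinj, ← Set.ncard_coe_finset, himg]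

end InterlacingAux

/-- If `G` on `n` vertices with `m` edges contains a Hamiltonian
cycle and `C` denotes the spanning subgraph given by the edges of that cycle (carrying
the restricted magnetic potential), then `λ_k(Δ_{α'}^{C}) ≤ λ_k(Δ_α^G)` for
`1 ≤ k ≤ n` and `λ_k(Δ_α^G) ≤ λ_{k+m-n}(Δ_{α'}^{C})` for `1 ≤ k ≤ 2n-m`. -/
theorem hamiltonian_cycle_interlacing {n m : ℕ} (G : SimpleGraph (Fin n))
    (hm : G.edgeSet.ncard = m)
    (α : Fin n → Fin n → ℝ) (hα : ∀ u v, α v u = -α u v)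
    (v : Fin n) (p : G.Walk v v) (hp : p.IsHamiltonianCycle) :
    (∀ k : ℕ, 1 ≤ k → k ≤ n →
      lamb (magLap_isHermitian (SimpleGraph.fromEdgeSet {e | e ∈ p.edges}) α hα) k ≤
        lamb (magLap_isHermitian G α hα) k) ∧
    (∀ k : ℕ, 1 ≤ k → k ≤ 2 * n - m →
      lamb (magLap_isHermitian G α hα) k ≤
        lamb (magLap_isHermitian (SimpleGraph.fromEdgeSet {e | e ∈ p.edges}) α hα)
          (k + m - n)) := by
  classical
  set C := SimpleGraph.fromEdgeSet {e | e ∈ p.edges} with hCdef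
  have hsub : ∀ {a b : Fin n}, C.Adj a b → G.Adj a b := by
    intro a b hab
    rw [hCdef, SimpleGraph.fromEdgeSet_adj] at hab
    exact (SimpleGraph.mem_edgeSet G).1 (p.edges_subset_edgeSet hab.1)
  set D : Finset (Fin n × Fin n) := Finset.univ.filter
    (fun q => q.1 < q.2 ∧ G.Adj q.1 q.2 ∧ ¬ C.Adj q.1 q.2) with hDdef
  have hD : ∀ q : Fin n × Fin n, q ∈ D ↔ q.1 < q.2 ∧ G.Adj q.1 q.2 ∧ ¬ C.Adj q.1 q.2 := by
    intro q
    simp [hDdef]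
  have hCedge : C.edgeSet = {e | e ∈ p.edges} := by
    rw [hCdef, SimpleGraph.edgeSet_fromEdgeSet]
    ext e
    simp only [Set.mem_diff, Set.mem_setOf_eq]
    exact ⟨fun h => h.1, fun he =>
      ⟨he, SimpleGraph.not_isDiag_of_mem_edgeSet G (p.edges_subset_edgeSet he)⟩⟩
  have hCcard : C.edgeSet.ncard = n := by
    rw [hCedge]
    have he : {e | e ∈ p.edges} = ↑p.edges.toFinset := by ext e; simp
    rw [he, Set.ncard_coe_finset, List.toFinset_card_of_nodup hp.isCycle.edges_nodup,
      p.length_edges, hp.length_eq, Fintype.card_fin]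
  have hCGsub : C.edgeSet ⊆ G.edgeSet := by
    rw [hCedge]
    exact fun e he => p.edges_subset_edgeSet he
  have hmn : n ≤ m := by
    have h := Set.ncard_le_ncard hCGsub (Set.toFinite _)
    omega
  have hDcard : D.card = m - n := by
    rw [D_card_eq G C D hD, Set.ncard_diff hCGsub, hm, hCcard]
  have hdec : magLap G α = magLap C α +
      ∑ j : {q // q ∈ D}, Matrix.vecMulVec (yvec α j.1.1 j.1.2)
        (star (yvec α j.1.1 j.1.2)) := by
    rw [magLap_decomp G C hsub α hα D hD]
    congr 1
    exact (Finset.sum_coe_sort D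
      (fun q => Matrix.vecMulVec (yvec α q.1 q.2) (star (yvec α q.1 q.2)))).symm
  have hcardι : Fintype.card {q // q ∈ D} = m - n := by
    rw [Fintype.card_coe]
    exact hDcard
  obtain ⟨h1, h2⟩ := interlacing_core (magLap_isHermitian C α hα) (magLap_isHermitian G α hα)
    (fun j : {q // q ∈ D} => yvec α j.1.1 j.1.2) hdec
  constructor
  · intro k hk1 hkn
    rw [lamb, dif_pos ⟨hk1, hkn⟩, lamb, dif_pos ⟨hk1, hkn⟩]
    exact EReal.coe_le_coe_iff.2 (h1 ⟨k - 1, by omega⟩)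
  · intro k hk1 hk2
    have hm2n : m < 2 * n := by omega
    have hb1 : 1 ≤ k + m - n ∧ k + m - n ≤ n := by omega
    have hb2 : 1 ≤ k ∧ k ≤ n := by omega
    rw [lamb, dif_pos hb2, lamb, dif_pos hb1]
    refine EReal.coe_le_coe_iff.2 ?_
    have := h2 ⟨k - 1, by omega⟩ ⟨k + m - n - 1, by omega⟩ (by rw [hcardι]; simp; omega)
    exact this
end
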